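/- arXiv:2001.11647 — 5 statements merged into one kernel-verified Lean document; each statement's English description precedes it below -/
import Mathlib

section
/- For every integer vector v = (v_1,…,v_r) with 0 ≤ v_r < v_{r−1} < ⋯ < v_1 < r+k, one has Σ_{μ∈P̄_k} S_μ(ζ_v)·conj(S_μ(ζ_v)) = (r+k)^r / D(v). -/
open scoped BigOperators
open Complex

noncomputable section

namespace VerlindePaper

/-- The Schur value `S_λ(z₁,…,z_r) = det(z_j^{λ_i+r-i}) / det(z_j^{r-i})`
(indices `i` are 0-based, so the exponent is `λ i + (r - 1 - i)`). -/
noncomputable def schur {r : ℕ} (lam : Fin r → ℤ) (z : Fin r → ℂ) : ℂ :=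
  Matrix.det (Matrix.of fun i j : Fin r => z j ^ (lam i + ((r : ℤ) - 1 - (i : ℕ)))) /
    Matrix.det (Matrix.of fun i j : Fin r => z j ^ ((r : ℤ) - 1 - (i : ℕ)))

/-- `ζ_v = (e^{2πi v_1/(r+k)}, …, e^{2πi v_r/(r+k)})`. -/
noncomputable def zeta (r k : ℕ) (v : Fin r → ℤ) : Fin r → ℂ :=
  fun j => Complex.exp (2 * (Real.pi : ℂ) * Complex.I * (v j : ℂ) / ((r : ℂ) + (k : ℂ)))

/-- `D(v) = ∏_{i<j} (2 sin(π(v_i - v_j)/(r+k)))²`. -/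
noncomputable def Dv (r k : ℕ) (v : Fin r → ℤ) : ℝ :=
  ∏ p ∈ Finset.univ.filter (fun p : Fin r × Fin r => p.1 < p.2),
    (2 * Real.sin (Real.pi * ((v p.1 : ℝ) - (v p.2 : ℝ)) / ((r : ℝ) + (k : ℝ)))) ^ 2

/-- `P̄_k = {μ : 0 ≤ μ_r ≤ ⋯ ≤ μ_1 ≤ k}` (0-based: `μ 0 = μ_1`). -/
def Pbar (r k : ℕ) : Finset (Fin r → ℤ) :=
  (Finset.Icc 0 (fun _ => (k : ℤ))).filter (fun μ => ∀ i j : Fin r, i ≤ j → μ j ≤ μ i)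

/-- `P_k = {μ : 0 ≤ μ_r ≤ ⋯ ≤ μ_1 ≤ k-1}`. -/
def Pk (r k : ℕ) : Finset (Fin r → ℤ) :=
  (Finset.Icc 0 (fun _ => (k : ℤ) - 1)).filter (fun μ => ∀ i j : Fin r, i ≤ j → μ j ≤ μ i)

/-- `W_k = {μ ∈ P̄_k : μ_r = 0}`. -/
def Wk (r k : ℕ) : Finset (Fin r → ℤ) :=
  (Pbar r k).filter (fun μ => ∀ i : Fin r, (i : ℕ) = r - 1 → μ i = 0)

/-- `μ* = (k - μ_r, k - μ_{r-1}, …, k - μ_1)`. -/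
def mustar (k : ℕ) {r : ℕ} (μ : Fin r → ℤ) : Fin r → ℤ :=
  fun i => (k : ℤ) - μ i.rev

/-- `μ ∼ ν` iff `μ - ν` is a constant vector. -/
def sim {r : ℕ} (μ ν : Fin r → ℤ) : Prop := ∃ a : ℤ, ∀ i, μ i = ν i + a

/-- The index set of the Verlinde sums: integer vectors with
`0 = v_r < v_{r-1} < ⋯ < v_1 < r + k`. -/
def Vset (r k : ℕ) : Finset (Fin r → ℤ) :=
  (Finset.Icc 0 (fun _ => (r : ℤ) + (k : ℤ) - 1)).filter
    (fun v => (∀ i j : Fin r, i < j → v j < v i) ∧ ∀ i : Fin r, (i : ℕ) = r - 1 → v i = 0)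

/-- The Verlinde number `V_g(r,d,(λ_x)_{x∈I})`. -/
noncomputable def verlinde (r k : ℕ) (g : ℕ) (d : ℤ) {I : Type*} [Fintype I]
    (lam : I → Fin r → ℤ) : ℂ :=
  (-1 : ℂ) ^ (d * ((r : ℤ) - 1)) * ((k : ℂ) / (r : ℂ)) ^ g *
    ((r : ℂ) * ((r : ℂ) + (k : ℂ)) ^ (r - 1)) ^ ((g : ℤ) - 1) *
    ∑ v ∈ Vset r k,
      Complex.exp (2 * (Real.pi : ℂ) * Complex.I *
          ((d : ℂ) / (r : ℂ) -
            (∑ x, ∑ i, (lam x i : ℂ)) / ((r : ℂ) * ((r : ℂ) + (k : ℂ)))) *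
          (∑ i, (v i : ℂ))) *
        (∏ x, schur (lam x) (zeta r k v)) * ((Dv r k v : ℂ)) ^ (1 - (g : ℤ))

/-- The Hecke transformation
`H¹(μ) = (k - μ_{r-1} + μ_r, μ_1 - μ_{r-1}, …, μ_{r-2} - μ_{r-1}, 0)`. -/
def H1 (k : ℕ) {r : ℕ} (μ : Fin r → ℤ) : Fin r → ℤ := fun j =>
  have hj : (j : ℕ) < r := j.isLt
  if (j : ℕ) = 0 then (k : ℤ) - μ ⟨r - 2, by omega⟩ + μ ⟨r - 1, by omega⟩
  else μ ⟨(j : ℕ) - 1, by omega⟩ - μ ⟨r - 2, by omega⟩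

/-- The iterated Hecke transformation `H^m = H¹ ∘ ⋯ ∘ H¹`. -/
def Hm (k : ℕ) {r : ℕ} (m : ℕ) (μ : Fin r → ℤ) : Fin r → ℤ := (H1 k)^[m] μ

/-- `μ ∈ Y(λ, ω_s)`: `μ` is a partition obtained from `λ` by adding `s` boxes,
no two in the same row. -/
def inY {r : ℕ} (lam : Fin r → ℤ) (s : ℕ) (μ : Fin r → ℤ) : Prop :=
  (∀ i j : Fin r, i ≤ j → μ j ≤ μ i) ∧ (∀ i, μ i - lam i = 0 ∨ μ i - lam i = 1) ∧
    (∑ i, μ i) = (∑ i, lam i) + (s : ℤ)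

/-- The Vandermonde product `Δ(z) = ∏_{i<j} (z_i - z_j)`. -/
noncomputable def vand {r : ℕ} (z : Fin r → ℂ) : ℂ :=
  ∏ p ∈ Finset.univ.filter (fun p : Fin r × Fin r => p.1 < p.2), (z p.1 - z p.2)

/-- `J_v(t) = Σ_{τ ∈ S_r} sgn(τ) exp(2πi (Σ_j v_{τ(j)} t_j)/(r+k))`. -/
noncomputable def Jv (r k : ℕ) (v : Fin r → ℤ) (t : Fin r → Fin (r + k)) : ℂ :=
  ∑ τ : Equiv.Perm (Fin r), ((Equiv.Perm.sign τ : ℤ) : ℂ) *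
    Complex.exp (2 * (Real.pi : ℂ) * Complex.I *
      (∑ j, (v (τ j) : ℂ) * ((t j : ℕ) : ℂ)) / ((r : ℂ) + (k : ℂ)))



/-! ### Auxiliary machinery -/

noncomputable def eu (N : ℕ) (m : ℤ) : ℂ := Complex.exp (2 * Real.pi * Complex.I * m / N)

lemma eu_add (N : ℕ) (a b : ℤ) : eu N (a + b) = eu N a * eu N b := by
  rw [eu, eu, eu, ← Complex.exp_add]
  push_cast
  ring_nf

lemma eu_zero (N : ℕ) : eu N 0 = 1 := by simp [eu]

lemma eu_eq_one_iff (N : ℕ) (hN : 0 < N) (m : ℤ) : eu N m = 1 ↔ (N : ℤ) ∣ m := by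
  rw [eu, Complex.exp_eq_one_iff]
  constructor
  · rintro ⟨l, hl⟩
    have hN' : (N : ℂ) ≠ 0 := by exact_mod_cast hN.ne'
    have h2 : (2 * (Real.pi : ℂ) * Complex.I) ≠ 0 := by
      simp [Real.pi_ne_zero, Complex.I_ne_zero]
    have hm : (m : ℂ) = l * N := by
      field_simp at hl
      linear_combination hl
    have : m = l * (N:ℤ) := by exact_mod_cast hm
    exact ⟨l, by rw [this]; ring⟩
  · rintro ⟨l, rfl⟩
    refine ⟨l, ?_⟩
    have hN' : (N : ℂ) ≠ 0 := by exact_mod_cast hN.ne'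
    push_cast
    field_simp

lemma conj_eu (N : ℕ) (m : ℤ) : (starRingEnd ℂ) (eu N m) = eu N (-m) := by
  rw [eu, eu, ← Complex.exp_conj]
  congr 1
  simp only [map_div₀, map_mul, Complex.conj_I, Complex.conj_ofReal, map_ofNat,
    Complex.conj_natCast, map_intCast]
  push_cast
  ring

lemma eu_pow (N : ℕ) (m : ℤ) (t : ℕ) : eu N m ^ t = eu N (t * m) := by
  induction t with
  | zero => simp [eu_zero]
  | succ t ih => rw [pow_succ, ih, ← eu_add]; congr 1; push_cast; ring

lemma eu_sum (N : ℕ) (hN : 0 < N) (m : ℤ) (hm : ¬ (N:ℤ) ∣ m) :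
    ∑ t : Fin N, eu N m ^ (t : ℕ) = 0 := by
  have h1 : eu N m ≠ 1 := fun h => hm ((eu_eq_one_iff N hN m).1 h)
  have hNpow : eu N m ^ N = 1 := by
    rw [eu_pow, eu_eq_one_iff N hN]; exact ⟨m, by push_cast; ring⟩
  rw [Fin.sum_univ_eq_sum_range, geom_sum_eq h1, hNpow]
  simp

lemma eu_exp_real (N : ℕ) (m : ℤ) :
    eu N m = Complex.exp (((2 * Real.pi * (m : ℝ) / (N : ℝ) : ℝ) : ℂ) * Complex.I) := by
  rw [eu]; congr 1; push_cast; ring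

lemma two_sub_eu (N : ℕ) (c d : ℤ) :
    (2 : ℂ) - eu N (d - c) - eu N (c - d)
      = (((2 * Real.sin (Real.pi * ((c : ℝ) - (d : ℝ)) / (N : ℝ))) ^ 2 : ℝ) : ℂ) := by
  set θ : ℝ := 2 * Real.pi * (((d - c : ℤ) : ℤ) : ℝ) / (N : ℝ) with hθ
  have h1 : eu N (d - c) = Complex.exp ((θ : ℂ) * Complex.I) := eu_exp_real N _
  have h2 : eu N (c - d) = Complex.exp ((-(θ : ℂ)) * Complex.I) := by
    rw [eu_exp_real]
    congr 2
    rw [hθ]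
    push_cast
    ring
  have hcos := Complex.two_cos (θ : ℂ)
  have hreal : (2 : ℂ) - 2 * Complex.cos (θ : ℂ)
      = (((2 - 2 * Real.cos θ : ℝ)) : ℂ) := by
    rw [← Complex.ofReal_cos]
    push_cast
    ring
  have hsin := Real.sin_sq_eq_half_sub (θ / 2)
  rw [show 2 * (θ / 2) = θ by ring] at hsin
  have harg : Real.pi * ((c : ℝ) - (d : ℝ)) / (N : ℝ) = -(θ / 2) := by
    rw [hθ]; push_cast; ring
  rw [h1, h2, harg, Real.sin_neg]
  have : (2 : ℂ) - Complex.exp ((θ : ℂ) * Complex.I) - Complex.exp ((-(θ:ℂ)) * Complex.I)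
      = (2 : ℂ) - 2 * Complex.cos (θ : ℂ) := by
    linear_combination hcos
  rw [this, hreal]
  congr 1
  nlinarith [hsin]

variable {r N : ℕ}

noncomputable def Amat (z : Fin r → ℂ) (N : ℕ) (f : Fin r → Fin N) : ℂ :=
  Matrix.det (Matrix.of fun i j : Fin r => z j ^ (f i : ℕ))

lemma sum_all (z : Fin r → ℂ)
    (horth : ∀ a b : Fin r,
      (∑ t : Fin N, (z a * (starRingEnd ℂ) (z b)) ^ (t : ℕ)) = if a = b then (N : ℂ) else 0) :
    ∑ f : Fin r → Fin N, Amat z N f * (starRingEnd ℂ) (Amat z N f)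
      = (r.factorial : ℂ) * (N : ℂ) ^ r := by
  classical
  have hA : ∀ f : Fin r → Fin N, Amat z N f =
      ∑ σ : Equiv.Perm (Fin r), ((Equiv.Perm.sign σ : ℤ) : ℂ) * ∏ i, z i ^ (f (σ i) : ℕ) :=
    fun f => Matrix.det_apply' _
  have hAc : ∀ f : Fin r → Fin N, (starRingEnd ℂ) (Amat z N f) =
      ∑ τ : Equiv.Perm (Fin r), ((Equiv.Perm.sign τ : ℤ) : ℂ) *
        ∏ i, ((starRingEnd ℂ) (z i)) ^ (f (τ i) : ℕ) := by
    intro f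
    rw [hA f, map_sum]
    refine Finset.sum_congr rfl fun τ _ => ?_
    rw [map_mul, map_prod]
    simp
  calc ∑ f : Fin r → Fin N, Amat z N f * (starRingEnd ℂ) (Amat z N f)
      = ∑ f : Fin r → Fin N, ∑ σ : Equiv.Perm (Fin r), ∑ τ : Equiv.Perm (Fin r),
          (((Equiv.Perm.sign σ : ℤ) : ℂ) * ((Equiv.Perm.sign τ : ℤ) : ℂ)) *
            ∏ i, (z (σ⁻¹ i) * (starRingEnd ℂ) (z (τ⁻¹ i))) ^ ((f i : ℕ)) := by
        refine Finset.sum_congr rfl fun f _ => ?_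
        rw [hAc f, hA f, Finset.sum_mul_sum]
        refine Finset.sum_congr rfl fun σ _ => Finset.sum_congr rfl fun τ _ => ?_
        have h1 : ∏ i, z i ^ (f (σ i) : ℕ) = ∏ i, z (σ⁻¹ i) ^ (f i : ℕ) := by
          rw [← Equiv.prod_comp σ (fun i => z (σ⁻¹ i) ^ (f i : ℕ))]
          simp
        have h2 : ∏ i, ((starRingEnd ℂ) (z i)) ^ (f (τ i) : ℕ)
            = ∏ i, ((starRingEnd ℂ) (z (τ⁻¹ i))) ^ (f i : ℕ) := by
          rw [← Equiv.prod_comp τ (fun i => ((starRingEnd ℂ) (z (τ⁻¹ i))) ^ (f i : ℕ))]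
          simp
        rw [h1, h2, mul_mul_mul_comm]
        congr 1
        rw [← Finset.prod_mul_distrib]
        exact Finset.prod_congr rfl fun i _ => (mul_pow _ _ _).symm
    _ = ∑ σ : Equiv.Perm (Fin r), ∑ τ : Equiv.Perm (Fin r),
          (((Equiv.Perm.sign σ : ℤ) : ℂ) * ((Equiv.Perm.sign τ : ℤ) : ℂ)) *
            ∏ i, ∑ t : Fin N, (z (σ⁻¹ i) * (starRingEnd ℂ) (z (τ⁻¹ i))) ^ (t : ℕ) := by
        rw [Finset.sum_comm]
        refine Finset.sum_congr rfl fun σ _ => ?_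
        rw [Finset.sum_comm]
        refine Finset.sum_congr rfl fun τ _ => ?_
        rw [← Finset.mul_sum]
        congr 1
        exact (Fintype.prod_sum (κ := fun _ : Fin r => Fin N)
          (fun i t => (z (σ⁻¹ i) * (starRingEnd ℂ) (z (τ⁻¹ i))) ^ (t : ℕ))).symm
    _ = ∑ σ : Equiv.Perm (Fin r), ∑ τ : Equiv.Perm (Fin r),
          (((Equiv.Perm.sign σ : ℤ) : ℂ) * ((Equiv.Perm.sign τ : ℤ) : ℂ)) *
            (if σ = τ then ((N : ℂ)) ^ r else 0) := by
        refine Finset.sum_congr rfl fun σ _ => Finset.sum_congr rfl fun τ _ => ?_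
        congr 1
        simp_rw [horth]
        by_cases h : σ = τ
        · subst h
          simp [Finset.card_univ]
        · have : ∃ i, σ⁻¹ i ≠ τ⁻¹ i := by
            by_contra hc
            push_neg at hc
            exact h (by rw [← inv_inv σ, ← inv_inv τ]; congr 1; exact Equiv.ext hc)
          obtain ⟨i, hi⟩ := this
          rw [if_neg h]
          exact Finset.prod_eq_zero (Finset.mem_univ i)
            (by have hi' : σ.symm i ≠ τ.symm i := hi; simp [hi'])
    _ = (r.factorial : ℂ) * (N : ℂ) ^ r := by
        have hdiag : ∀ σ : Equiv.Perm (Fin r),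
            (∑ τ : Equiv.Perm (Fin r), (((Equiv.Perm.sign σ : ℤ) : ℂ) * ((Equiv.Perm.sign τ : ℤ) : ℂ)) *
              (if σ = τ then ((N : ℂ)) ^ r else 0)) = (N : ℂ) ^ r := by
          intro σ
          rw [Finset.sum_eq_single σ]
          · rcases Int.units_eq_one_or (Equiv.Perm.sign σ) with h | h <;> simp [h]
          · intro τ _ hne
            simp [Ne.symm hne]
          · simp
        rw [Finset.sum_congr rfl fun σ _ => hdiag σ, Finset.sum_const, Finset.card_univ,
          Fintype.card_perm, Fintype.card_fin, nsmul_eq_mul]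

lemma card_image_eq (f : Fin r → Fin N) (hf : Function.Injective f) :
    (Finset.image f Finset.univ).card = r := by
  rw [Finset.card_image_of_injective _ hf, Finset.card_univ, Fintype.card_fin]

noncomputable def sTup (f : Fin r → Fin N) (hf : Function.Injective f) : Fin r → Fin N :=
  fun i => (Finset.image f Finset.univ).orderEmbOfFin (card_image_eq f hf) i.rev

noncomputable def sPermFun (f : Fin r → Fin N) (hf : Function.Injective f) : Fin r → Fin r :=
  fun i => Fin.rev (((Finset.image f Finset.univ).orderIsoOfFin (card_image_eq f hf)).symm
    ⟨f i, Finset.mem_image_of_mem f (Finset.mem_univ i)⟩)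

lemma sTup_comp (f : Fin r → Fin N) (hf : Function.Injective f) (i : Fin r) :
    sTup f hf (sPermFun f hf i) = f i := by
  simp only [sTup, sPermFun, Fin.rev_rev, ← Finset.coe_orderIsoOfFin_apply,
    OrderIso.apply_symm_apply]

lemma sPermFun_injective (f : Fin r → Fin N) (hf : Function.Injective f) :
    Function.Injective (sPermFun f hf) := by
  intro i j hij
  apply hf
  have := congrArg (sTup f hf) hij
  rwa [sTup_comp, sTup_comp] at this

noncomputable def sPerm (f : Fin r → Fin N) (hf : Function.Injective f) : Equiv.Perm (Fin r) :=
  Equiv.ofBijective _ (Finite.injective_iff_bijective.1 (sPermFun_injective f hf))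

lemma sTup_comp_perm (f : Fin r → Fin N) (hf : Function.Injective f) :
    sTup f hf ∘ (sPerm f hf) = f :=
  funext fun i => sTup_comp f hf i

lemma sTup_strictAnti (f : Fin r → Fin N) (hf : Function.Injective f) :
    StrictAnti (sTup f hf) := by
  intro i j hij
  exact ((Finset.image f Finset.univ).orderEmbOfFin (card_image_eq f hf)).strictMono
    (Fin.rev_lt_rev.2 hij)

lemma image_comp_perm (g : Fin r → Fin N) (σ : Equiv.Perm (Fin r)) :
    Finset.image (g ∘ σ) Finset.univ = Finset.image g Finset.univ := by
  rw [← Finset.image_image, Finset.image_univ_equiv]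

lemma sTup_eq_of_strictAnti (g : Fin r → Fin N) (hg : StrictAnti g) (σ : Equiv.Perm (Fin r))
    (hinj : Function.Injective (g ∘ σ)) : sTup (g ∘ σ) hinj = g := by
  have hmono : StrictMono (fun i : Fin r => g i.rev) := by
    intro i j hij
    exact hg (Fin.rev_lt_rev.2 hij)
  have hfs : ∀ x : Fin r, g x.rev ∈ Finset.image (g ∘ σ) Finset.univ := by
    intro x
    rw [image_comp_perm]
    exact Finset.mem_image_of_mem g (Finset.mem_univ _)
  have hu := Finset.orderEmbOfFin_unique (card_image_eq (g ∘ σ) hinj) hfs hmono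
  funext i
  have := congrFun hu i.rev
  simp only [Fin.rev_rev] at this
  rw [sTup, ← this]

lemma sPerm_eq_of_strictAnti (g : Fin r → Fin N) (hg : StrictAnti g) (σ : Equiv.Perm (Fin r))
    (hinj : Function.Injective (g ∘ σ)) : sPerm (g ∘ σ) hinj = σ := by
  apply Equiv.ext
  intro i
  apply hg.injective
  have h1 := sTup_comp (g ∘ σ) hinj i
  rw [sTup_eq_of_strictAnti g hg σ hinj] at h1
  exact h1

lemma sum_eq_factorial_mul_strictAnti (G : (Fin r → Fin N) → ℂ)
    (hzero : ∀ f : Fin r → Fin N, ¬ Function.Injective f → G f = 0)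
    (hperm : ∀ (f : Fin r → Fin N) (σ : Equiv.Perm (Fin r)), G (f ∘ σ) = G f) :
    ∑ f : Fin r → Fin N, G f
      = (r.factorial : ℂ) *
        ∑ f ∈ Finset.univ.filter (fun f : Fin r → Fin N => StrictAnti f), G f := by
  classical
  have h1 : ∑ f : Fin r → Fin N, G f
      = ∑ f ∈ Finset.univ.filter (fun f : Fin r → Fin N => Function.Injective f), G f := by
    rw [← Finset.sum_filter_add_sum_filter_not Finset.univ
      (fun f : Fin r → Fin N => Function.Injective f) G]
    have hz : ∑ f ∈ Finset.univ.filter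
        (fun f : Fin r → Fin N => ¬ Function.Injective f), G f = 0 :=
      Finset.sum_eq_zero fun f hf => hzero f (Finset.mem_filter.1 hf).2
    rw [hz, add_zero]
  have h2 : ∑ f ∈ Finset.univ.filter (fun f : Fin r → Fin N => Function.Injective f), G f
      = ∑ p ∈ (Finset.univ.filter (fun f : Fin r → Fin N => StrictAnti f)) ×ˢ
          (Finset.univ : Finset (Equiv.Perm (Fin r))), G (p.1 ∘ p.2) := by
    refine Finset.sum_bij'
      (i := fun f hf => (sTup f (Finset.mem_filter.1 hf).2, sPerm f (Finset.mem_filter.1 hf).2))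
      (j := fun p hp => p.1 ∘ p.2) ?_ ?_ ?_ ?_ ?_
    · intro f hf
      refine Finset.mem_product.2 ⟨Finset.mem_filter.2 ⟨Finset.mem_univ _, ?_⟩, Finset.mem_univ _⟩
      exact sTup_strictAnti f (Finset.mem_filter.1 hf).2
    · intro p hp
      refine Finset.mem_filter.2 ⟨Finset.mem_univ _, ?_⟩
      have hg : StrictAnti p.1 := (Finset.mem_filter.1 (Finset.mem_product.1 hp).1).2
      exact hg.injective.comp p.2.injective
    · intro f hf
      exact sTup_comp_perm f (Finset.mem_filter.1 hf).2
    · intro p hp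
      have hg : StrictAnti p.1 := (Finset.mem_filter.1 (Finset.mem_product.1 hp).1).2
      have hinj : Function.Injective (p.1 ∘ p.2) := hg.injective.comp p.2.injective
      exact Prod.ext (sTup_eq_of_strictAnti p.1 hg p.2 hinj)
        (sPerm_eq_of_strictAnti p.1 hg p.2 hinj)
    · intro f hf
      rw [sTup_comp_perm f (Finset.mem_filter.1 hf).2]
  rw [h1, h2, Finset.sum_product, Finset.mul_sum]
  refine Finset.sum_congr rfl fun g hg => ?_
  rw [Finset.sum_congr rfl fun σ _ => hperm g σ, Finset.sum_const, Finset.card_univ,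
    Fintype.card_perm, Fintype.card_fin, nsmul_eq_mul]

lemma strictAnti_gap (f : Fin r → Fin N) (hf : StrictAnti f) :
    ∀ i j : Fin r, i ≤ j → (f j : ℤ) + (j : ℕ) ≤ (f i : ℤ) + (i : ℕ) := by
  have key : ∀ d : ℕ, ∀ i j : Fin r, (j : ℕ) = (i : ℕ) + d → (f j : ℤ) + d ≤ (f i : ℤ) := by
    intro d
    induction d with
    | zero => intro i j h; have : i = j := Fin.ext (by omega); subst this; simp
    | succ d ih =>
      intro i j h
      have hd : (i : ℕ) + d < r := by have := j.isLt; omega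
      set j' : Fin r := ⟨(i : ℕ) + d, hd⟩ with hj'
      have h1 : (f j' : ℤ) + d ≤ f i := ih i j' rfl
      have h2 : f j < f j' := hf (by simp [hj', Fin.lt_def]; omega)
      have h3 : (f j : ℤ) < f j' := by exact_mod_cast h2
      omega
  intro i j hij
  have := key ((j : ℕ) - (i : ℕ)) i j (by omega)
  have hij' : (i : ℕ) ≤ (j : ℕ) := hij
  omega

lemma strictAnti_lower (f : Fin r → Fin N) (hf : StrictAnti f) (i : Fin r) :
    ((r : ℤ) - 1 - (i : ℕ)) ≤ (f i : ℤ) := by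
  have hr : 0 < r := i.pos
  have hlast : ((r : ℕ) - 1) < r := by omega
  have := strictAnti_gap f hf i ⟨r - 1, hlast⟩ (by simp [Fin.le_def]; omega)
  simp only at this
  have h0 : (0 : ℤ) ≤ (f ⟨r - 1, hlast⟩ : ℤ) := by positivity
  have : ((r : ℕ) - 1 : ℕ) = ((r : ℤ) - 1 : ℤ) := by push_cast; omega
  omega

lemma strictAnti_upper (f : Fin r → Fin N) (hf : StrictAnti f) (i : Fin r) :
    (f i : ℤ) + (i : ℕ) ≤ (N : ℤ) - 1 := by
  have hr : 0 < r := i.pos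
  have h0 : (0 : ℕ) < r := hr
  have := strictAnti_gap f hf ⟨0, h0⟩ i (by simp [Fin.le_def])
  have hb : (f ⟨0, h0⟩ : ℤ) ≤ (N : ℤ) - 1 := by
    have := (f ⟨0, h0⟩).isLt; omega
  simp only [Fin.val_mk, Nat.cast_zero, add_zero] at this
  omega

lemma sum_strictAnti_eq_sum_Pbar (k : ℕ) (hN : N = r + k)
    (G : (Fin r → Fin N) → ℂ) (Smd : (Fin r → ℤ) → ℂ)
    (hmatch : ∀ f : Fin r → Fin N, StrictAnti f →
      G f = Smd (fun i => (f i : ℤ) - ((r : ℤ) - 1 - (i : ℕ)))) :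
    ∑ f ∈ Finset.univ.filter (fun f : Fin r → Fin N => StrictAnti f), G f
      = ∑ μ ∈ Pbar r k, Smd μ := by
  classical
  refine Finset.sum_bij'
    (i := fun f _ => (fun i => (f i : ℤ) - ((r : ℤ) - 1 - (i : ℕ)) : Fin r → ℤ))
    (j := fun μ hμ => fun i => (⟨(μ i).toNat + (r - 1 - (i : ℕ)),
      by
        have hμ' := Finset.mem_filter.1 hμ
        have h1 := (Finset.mem_Icc.1 hμ'.1).1 i
        have h2 : μ i ≤ (k : ℤ) := (Finset.mem_Icc.1 hμ'.1).2 i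
        simp only [Pi.zero_apply] at h1
        have : (μ i).toNat ≤ k := by omega
        have hi := i.isLt
        omega⟩ : Fin N)) ?_ ?_ ?_ ?_ ?_
  · intro f hf
    have hsa : StrictAnti f := (Finset.mem_filter.1 hf).2
    refine Finset.mem_filter.2 ⟨Finset.mem_Icc.2 ⟨?_, ?_⟩, ?_⟩
    · intro i
      have := strictAnti_lower f hsa i
      simp only [Pi.zero_apply]
      omega
    · intro i
      have := strictAnti_upper f hsa i
      have hi := i.isLt
      have hup : (f i : ℤ) ≤ (N : ℤ) - 1 - (i : ℕ) := by omega
      have hNk : (N : ℤ) = (r : ℤ) + k := by exact_mod_cast congrArg (Nat.cast : ℕ → ℤ) hN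
      show (f i : ℤ) - ((r : ℤ) - 1 - (i : ℕ)) ≤ (k : ℤ)
      omega
    · intro i j hij
      have := strictAnti_gap f hsa i j hij
      have hij' : (i : ℕ) ≤ (j : ℕ) := hij
      show (f j : ℤ) - ((r : ℤ) - 1 - (j : ℕ)) ≤ (f i : ℤ) - ((r : ℤ) - 1 - (i : ℕ))
      omega
  · intro μ hμ
    refine Finset.mem_filter.2 ⟨Finset.mem_univ _, ?_⟩
    intro i j hij
    have hμ' := Finset.mem_filter.1 hμ
    have h1 := (Finset.mem_Icc.1 hμ'.1).1 j
    have h1' := (Finset.mem_Icc.1 hμ'.1).1 i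
    simp only [Pi.zero_apply] at h1 h1'
    have h2 := hμ'.2 i j (le_of_lt hij)
    have hlt : (i : ℕ) < (j : ℕ) := hij
    have hj := j.isLt
    simp only [Fin.mk_lt_mk]
    omega
  · intro f hf
    have hsa : StrictAnti f := (Finset.mem_filter.1 hf).2
    funext i
    apply Fin.ext
    simp only [Fin.val_mk]
    have hl := strictAnti_lower f hsa i
    have hi := i.isLt
    omega
  · intro μ hμ
    funext i
    have hμ' := Finset.mem_filter.1 hμ
    have h1 := (Finset.mem_Icc.1 hμ'.1).1 i
    simp only [Pi.zero_apply] at h1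
    have hi := i.isLt
    simp only [Fin.val_mk]
    push_cast
    omega
  · intro f hf
    exact hmatch f (Finset.mem_filter.1 hf).2

lemma pairProd {M : Type*} [CommMonoid M] (F : Fin r → Fin r → M) :
    ∏ p ∈ Finset.univ.filter (fun p : Fin r × Fin r => p.1 < p.2), F p.1 p.2
      = ∏ i, ∏ j ∈ Finset.Ioi i, F i j := by
  classical
  rw [← Finset.prod_sigma (Finset.univ) (fun i => Finset.Ioi i)
    (fun p : Σ _ : Fin r, Fin r => F p.1 p.2)]
  refine Finset.prod_nbij' (i := fun p => ⟨p.1, p.2⟩) (j := fun p => (p.1, p.2))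
    ?_ ?_ ?_ ?_ ?_
  · intro p hp
    have := (Finset.mem_filter.1 hp).2
    exact Finset.mem_sigma.2 ⟨Finset.mem_univ _, Finset.mem_Ioi.2 this⟩
  · intro p hp
    have := Finset.mem_Ioi.1 (Finset.mem_sigma.1 hp).2
    exact Finset.mem_filter.2 ⟨Finset.mem_univ _, this⟩
  · intro p _; rfl
  · intro p _; rfl
  · intro p _; rfl


/-- `Σ_{μ∈P̄_k} S_μ(ζ_v)·conj(S_μ(ζ_v)) = (r+k)^r / D(v)`. -/
theorem sum_Pbar_schur_normSq (r k : ℕ) (hr : 1 ≤ r) (hk : 1 ≤ k)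
    (v : Fin r → ℤ) (hdec : ∀ i j : Fin r, i < j → v j < v i)
    (hlow : ∀ i, 0 ≤ v i) (hhigh : ∀ i, v i < (r : ℤ) + (k : ℤ)) :
    ∑ μ ∈ Pbar r k, schur μ (zeta r k v) * (starRingEnd ℂ) (schur μ (zeta r k v)) =
      ((r : ℂ) + (k : ℂ)) ^ r / ((Dv r k v : ℝ) : ℂ) := by
  classical
  set n := r + k with hn
  have hn0 : 0 < n := by omega
  have hnC : ((n : ℕ) : ℂ) = (r : ℂ) + (k : ℂ) := by rw [hn]; push_cast; ring
  have hnR : ((n : ℕ) : ℝ) = (r : ℝ) + (k : ℝ) := by rw [hn]; push_cast; ring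
  set z : Fin r → ℂ := zeta r k v with hzdef
  have hzeu : ∀ j, z j = eu n (v j) := by
    intro j
    rw [hzdef, zeta, eu, hnC]
  have hzz : ∀ a b : Fin r, z a * (starRingEnd ℂ) (z b) = eu n (v a - v b) := by
    intro a b
    rw [hzeu, hzeu, conj_eu, ← eu_add]
    ring_nf
  have hvne : ∀ a b : Fin r, a ≠ b → ¬ ((n : ℤ) ∣ (v a - v b)) := by
    intro a b hab hdvd
    have hne : v a ≠ v b := by
      rcases lt_or_gt_of_ne hab with h | h
      · exact ne_of_gt (hdec a b h)
      · exact ne_of_lt (hdec b a h)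
    have hcast : ((n : ℕ) : ℤ) = (r : ℤ) + (k : ℤ) := by rw [hn]; push_cast; ring
    have habs : |v a - v b| < (n : ℤ) := by
      have h1 := hlow a; have h2 := hlow b; have h3 := hhigh a; have h4 := hhigh b
      rw [abs_lt]
      omega
    have := Int.eq_zero_of_abs_lt_dvd hdvd habs
    omega
  have horth : ∀ a b : Fin r,
      (∑ t : Fin n, (z a * (starRingEnd ℂ) (z b)) ^ (t : ℕ)) = if a = b then (n : ℂ) else 0 := by
    intro a b
    rw [hzz]
    by_cases hab : a = b
    · subst hab
      rw [if_pos rfl, sub_self, eu_zero]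
      simp
    · rw [if_neg hab]
      exact eu_sum n hn0 _ (hvne a b hab)
  set num : (Fin r → ℤ) → ℂ := fun μ =>
    Matrix.det (Matrix.of fun i j : Fin r => z j ^ (μ i + ((r : ℤ) - 1 - (i : ℕ)))) with hnum
  set den : ℂ :=
    Matrix.det (Matrix.of fun i j : Fin r => z j ^ ((r : ℤ) - 1 - (i : ℕ))) with hdenm
  have hschur : ∀ μ : Fin r → ℤ, schur μ z = num μ / den := fun μ => rfl
  have hzero : ∀ f : Fin r → Fin n, ¬ Function.Injective f → Amat z n f = 0 := by
    intro f hf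
    rw [Function.not_injective_iff] at hf
    obtain ⟨a, b, hab, hne⟩ := hf
    refine Matrix.det_zero_of_row_eq hne (funext fun j => ?_)
    simp [Matrix.of_apply, hab]
  have hperm : ∀ (f : Fin r → Fin n) (σ : Equiv.Perm (Fin r)),
      Amat z n (f ∘ σ) * (starRingEnd ℂ) (Amat z n (f ∘ σ))
        = Amat z n f * (starRingEnd ℂ) (Amat z n f) := by
    intro f σ
    have h2 : (Matrix.of fun i j : Fin r => z j ^ ((f ∘ σ) i : ℕ))
        = (Matrix.of fun i j : Fin r => z j ^ (f i : ℕ)).submatrix σ id := rfl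
    have h1 : Amat z n (f ∘ σ) = ((Equiv.Perm.sign σ : ℤ) : ℂ) * Amat z n f := by
      rw [Amat, h2, Matrix.det_permute, Amat]
    rw [h1, map_mul]
    rcases Int.units_eq_one_or (Equiv.Perm.sign σ) with h | h <;>
      · rw [h]; push_cast; ring_nf; simp
  have hkey : ∑ μ ∈ Pbar r k, num μ * (starRingEnd ℂ) (num μ) = ((n : ℕ) : ℂ) ^ r := by
    have hmatch : ∀ f : Fin r → Fin n, StrictAnti f →
        Amat z n f * (starRingEnd ℂ) (Amat z n f)
          = (fun μ => num μ * (starRingEnd ℂ) (num μ))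
              (fun i => (f i : ℤ) - ((r : ℤ) - 1 - (i : ℕ))) := by
      intro f _
      have hM : (Matrix.of fun i j : Fin r =>
            z j ^ (((f i : ℤ) - ((r : ℤ) - 1 - (i : ℕ))) + ((r : ℤ) - 1 - (i : ℕ))))
          = (Matrix.of fun i j : Fin r => z j ^ ((f i : ℕ))) := by
        ext i j
        rw [Matrix.of_apply, Matrix.of_apply,
          show ((f i : ℤ) - ((r : ℤ) - 1 - (i : ℕ))) + ((r : ℤ) - 1 - (i : ℕ))
            = ((f i : ℕ) : ℤ) by push_cast; ring, zpow_natCast]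
      have hm : num (fun i => (f i : ℤ) - ((r : ℤ) - 1 - (i : ℕ))) = Amat z n f := by
        rw [hnum]
        exact congrArg Matrix.det hM
      simp only [hm]
    have h1 := sum_strictAnti_eq_sum_Pbar (r := r) (N := n) k rfl
      (fun f => Amat z n f * (starRingEnd ℂ) (Amat z n f))
      (fun μ => num μ * (starRingEnd ℂ) (num μ)) hmatch
    have h2 := sum_eq_factorial_mul_strictAnti (r := r) (N := n)
      (fun f => Amat z n f * (starRingEnd ℂ) (Amat z n f))
      (fun f hf => by
        show Amat z n f * (starRingEnd ℂ) (Amat z n f) = 0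
        rw [hzero f hf]; simp) hperm
    have h3 := sum_all (N := n) z horth
    rw [h1] at h2
    rw [h3] at h2
    have hfac : ((r.factorial : ℕ) : ℂ) ≠ 0 := Nat.cast_ne_zero.2 r.factorial_ne_zero
    exact mul_left_cancel₀ hfac h2.symm
  have hp : ∀ a b : Fin r,
      (z b - z a) * ((starRingEnd ℂ) (z b) - (starRingEnd ℂ) (z a))
        = (((2 * Real.sin (Real.pi * ((v a : ℝ) - (v b : ℝ)) / ((r : ℝ) + (k : ℝ)))) ^ 2 : ℝ) : ℂ) := by
    intro a b
    have h1 : z b * (starRingEnd ℂ) (z b) = 1 := by rw [hzz, sub_self, eu_zero]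
    have h2 : z a * (starRingEnd ℂ) (z a) = 1 := by rw [hzz, sub_self, eu_zero]
    have hL : (z b - z a) * ((starRingEnd ℂ) (z b) - (starRingEnd ℂ) (z a))
        = 2 - eu n (v b - v a) - eu n (v a - v b) := by
      linear_combination h1 + h2 - hzz b a - hzz a b
    rw [hL, two_sub_eu n (v a) (v b), hnR]
  have hden : den * (starRingEnd ℂ) den = ((Dv r k v : ℝ) : ℂ) := by
    have hzipow : (Matrix.of fun i j : Fin r => z j ^ ((r : ℤ) - 1 - (i : ℕ)))
        = ((Matrix.vandermonde z).transpose).submatrix Fin.revPerm id := by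
      ext i j
      rw [Matrix.of_apply, Matrix.submatrix_apply, Matrix.transpose_apply,
        Matrix.vandermonde_apply]
      have hexp : ((r : ℤ) - 1 - (i : ℕ)) = (((Fin.revPerm i : Fin r) : ℕ) : ℤ) := by
        have hi := i.isLt
        simp only [Fin.revPerm_apply, Fin.val_rev]
        push_cast
        omega
      rw [hexp, zpow_natCast]
      rfl
    have hdv : den = ((Equiv.Perm.sign (Fin.revPerm (n := r)) : ℤ) : ℂ)
        * (Matrix.vandermonde z).det := by
      rw [hdenm, hzipow, Matrix.det_permute, Matrix.det_transpose]
    have hvdm : (Matrix.vandermonde z).det * (starRingEnd ℂ) ((Matrix.vandermonde z).det)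
        = ((Dv r k v : ℝ) : ℂ) := by
      rw [Matrix.det_vandermonde, map_prod]
      simp_rw [map_prod, map_sub]
      rw [← Finset.prod_mul_distrib]
      have hstep : ∀ i : Fin r,
          (∏ j ∈ Finset.Ioi i, (z j - z i)) * (∏ j ∈ Finset.Ioi i,
            ((starRingEnd ℂ) (z j) - (starRingEnd ℂ) (z i)))
          = ∏ j ∈ Finset.Ioi i,
              (((2 * Real.sin (Real.pi * ((v i : ℝ) - (v j : ℝ)) / ((r : ℝ) + (k : ℝ)))) ^ 2 : ℝ) : ℂ) := by
        intro i
        rw [← Finset.prod_mul_distrib]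
        exact Finset.prod_congr rfl fun j _ => hp i j
      rw [Finset.prod_congr rfl fun i _ => hstep i, Dv, Complex.ofReal_prod]
      rw [pairProd (F := fun a b : Fin r =>
        ((((2 * Real.sin (Real.pi * ((v a : ℝ) - (v b : ℝ)) / ((r : ℝ) + (k : ℝ)))) ^ 2 : ℝ)) : ℂ))]
    have hs : ((Equiv.Perm.sign (Fin.revPerm (n := r)) : ℤ) : ℂ)
        * (starRingEnd ℂ) ((Equiv.Perm.sign (Fin.revPerm (n := r)) : ℤ) : ℂ) = 1 := by
      rcases Int.units_eq_one_or (Equiv.Perm.sign (Fin.revPerm (n := r))) with h | h <;>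
        · rw [h]; push_cast; ring_nf; simp
    calc den * (starRingEnd ℂ) den
        = (((Equiv.Perm.sign (Fin.revPerm (n := r)) : ℤ) : ℂ)
            * (starRingEnd ℂ) ((Equiv.Perm.sign (Fin.revPerm (n := r)) : ℤ) : ℂ))
          * ((Matrix.vandermonde z).det * (starRingEnd ℂ) ((Matrix.vandermonde z).det)) := by
          rw [hdv, map_mul]; ring
      _ = ((Dv r k v : ℝ) : ℂ) := by rw [hs, hvdm, one_mul]
  calc ∑ μ ∈ Pbar r k, schur μ z * (starRingEnd ℂ) (schur μ z)
      = ∑ μ ∈ Pbar r k, (num μ * (starRingEnd ℂ) (num μ)) / (den * (starRingEnd ℂ) den) := by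
        refine Finset.sum_congr rfl fun μ _ => ?_
        rw [hschur, map_div₀, div_mul_div_comm]
    _ = (∑ μ ∈ Pbar r k, num μ * (starRingEnd ℂ) (num μ)) / (den * (starRingEnd ℂ) den) := by
        rw [Finset.sum_div]
    _ = ((r : ℂ) + (k : ℂ)) ^ r / ((Dv r k v : ℝ) : ℂ) := by
        rw [hkey, hden, hnC]

end VerlindePaper
end
end

section
/- For every integer vector v = (v_1,…,v_r) with 0 ≤ v_r < v_{r−1} < ⋯ < v_1 < r+k, one has Σ_{μ∈P′_k} S_μ(ζ_v)·conj(S_μ(ζ_v)) = r(r+k)^{r−1} / D(v), where P′_k := {μ ∈ P̄_k : μ_1 = k}. -/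
open scoped BigOperators
open Complex

noncomputable section

namespace VerlindePaper

noncomputable def ee (n : ℕ) (a : ℤ) : ℂ :=
  Complex.exp (2 * (Real.pi : ℂ) * Complex.I * (a : ℂ) / (n : ℂ))

lemma ee_ne_zero (n : ℕ) (a : ℤ) : ee n a ≠ 0 := Complex.exp_ne_zero _

lemma ee_mul (n : ℕ) (a b : ℤ) : ee n a * ee n b = ee n (a + b) := by
  rw [ee, ee, ee, ← Complex.exp_add]
  congr 1
  push_cast
  ring

lemma ee_zpow (n : ℕ) (a b : ℤ) : ee n a ^ b = ee n (a * b) := by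
  rw [ee, ee, ← Complex.exp_int_mul]
  congr 1
  push_cast
  ring

lemma conj_ee (n : ℕ) (a : ℤ) : (starRingEnd ℂ) (ee n a) = ee n (-a) := by
  rw [ee, ee, ← Complex.exp_conj]
  congr 1
  simp only [map_div₀, map_mul, map_ofNat, Complex.conj_I, Complex.conj_ofReal, map_intCast,
    map_natCast]
  push_cast
  ring

lemma ee_zero (n : ℕ) : ee n 0 = 1 := by
  simp [ee]

lemma ee_pow_n (n : ℕ) (hn : 0 < n) (a : ℤ) : ee n a ^ n = 1 := by
  have h1 : ee n a ^ n = ee n a ^ (n : ℤ) := (zpow_natCast _ n).symm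
  rw [h1, ee_zpow, ee]
  have hn' : (n : ℂ) ≠ 0 := Nat.cast_ne_zero.2 hn.ne'
  rw [show 2 * (Real.pi : ℂ) * Complex.I * ((a * n : ℤ) : ℂ) / (n : ℂ)
      = (a : ℤ) * (2 * (Real.pi : ℂ) * Complex.I) by push_cast; field_simp]
  exact Complex.exp_int_mul_two_pi_mul_I a

lemma ee_ne_one (n : ℕ) (a : ℤ) (ha : a ≠ 0) (h : |a| < n) : ee n a ≠ 1 := by
  intro h1
  rw [ee, Complex.exp_eq_one_iff] at h1
  obtain ⟨m, hm⟩ := h1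
  have hn : 0 < n := by
    have h0 : (0 : ℤ) < (n : ℤ) := lt_of_le_of_lt (abs_nonneg a) h
    exact_mod_cast h0
  have hn' : (n : ℂ) ≠ 0 := Nat.cast_ne_zero.2 hn.ne'
  have hπ : (Real.pi : ℂ) ≠ 0 := Complex.ofReal_ne_zero.2 Real.pi_ne_zero
  have hfac : (2 : ℂ) * (Real.pi : ℂ) * Complex.I ≠ 0 := by
    simp [hπ, Complex.I_ne_zero]
  have h2 : 2 * (Real.pi : ℂ) * Complex.I * (a : ℂ)
      = 2 * (Real.pi : ℂ) * Complex.I * ((m : ℂ) * (n : ℂ)) := by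
    have h3 := congrArg (fun z => z * (n : ℂ)) hm
    rw [div_mul_cancel₀ _ hn'] at h3
    rw [h3]; ring
  have h4 : (a : ℂ) = ((m * n : ℤ) : ℂ) := by
    have := mul_left_cancel₀ hfac h2
    push_cast
    exact this
  have h5 : a = m * n := by exact_mod_cast h4
  have hm0 : m ≠ 0 := by
    rintro rfl
    simp at h5
    exact ha h5
  have habs : |a| = |m| * (n : ℤ) := by
    rw [h5, abs_mul, Int.abs_natCast]
  have h1m : 1 ≤ |m| := Int.one_le_abs hm0
  have hnn : (0 : ℤ) < (n : ℤ) := by exact_mod_cast hn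
  nlinarith [h, habs, h1m, hnn]

lemma sum_range_ee (n : ℕ) (a : ℤ) (ha : a ≠ 0) (h : |a| < n) :
    ∑ b ∈ Finset.range n, ee n a ^ (b : ℤ) = 0 := by
  have hn : 0 < n := by
    have h0 : (0 : ℤ) < (n : ℤ) := lt_of_le_of_lt (abs_nonneg a) h
    exact_mod_cast h0
  have hne : ee n a ≠ 1 := ee_ne_one n a ha h
  have h1 : ∑ b ∈ Finset.range n, ee n a ^ (b : ℤ) = ∑ b ∈ Finset.range n, ee n a ^ b :=
    Finset.sum_congr rfl fun b _ => zpow_natCast _ b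
  rw [h1, geom_sum_eq hne, ee_pow_n n hn a]
  simp

lemma sum_Icc_int (n : ℕ) (f : ℤ → ℂ) :
    ∑ b ∈ Finset.Icc (0 : ℤ) ((n : ℤ) - 1), f b = ∑ b ∈ Finset.range n, f ((b : ℕ) : ℤ) := by
  refine Finset.sum_nbij' (fun b => b.toNat) (fun b => (b : ℤ)) ?_ ?_ ?_ ?_ ?_
  · intro b hb
    simp only [Finset.mem_Icc] at hb
    simp only [Finset.mem_range]
    omega
  · intro b hb
    simp only [Finset.mem_range] at hb
    simp only [Finset.mem_Icc]
    omega
  · intro b hb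
    simp only [Finset.mem_Icc] at hb
    show ((b.toNat : ℕ) : ℤ) = b
    omega
  · intro b _
    show ((b : ℤ)).toNat = b
    omega
  · intro b hb
    simp only [Finset.mem_Icc] at hb
    show f b = f ((b.toNat : ℕ) : ℤ)
    congr 1
    omega

lemma sum_Icc_ee (n : ℕ) (a : ℤ) (ha : a ≠ 0) (h : |a| < n) :
    ∑ b ∈ Finset.Icc (0 : ℤ) ((n : ℤ) - 1), ee n a ^ b = 0 := by
  rw [sum_Icc_int n (fun b => ee n a ^ b)]
  exact sum_range_ee n a ha h

lemma sum_Icc_one (n : ℕ) :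
    ∑ b ∈ Finset.Icc (0 : ℤ) ((n : ℤ) - 1), (1 : ℂ) ^ b = (n : ℂ) := by
  rw [sum_Icc_int n (fun b => (1 : ℂ) ^ b)]
  simp

noncomputable def Mm (n : ℕ) {r : ℕ} (v t : Fin r → ℤ) : Matrix (Fin r) (Fin r) ℂ :=
  Matrix.of fun i j => ee n (v j) ^ (t i)

noncomputable def gg (n : ℕ) {r : ℕ} (v t : Fin r → ℤ) : ℂ :=
  (Mm n v t).det * (starRingEnd ℂ) (Mm n v t).det

lemma sign_sq {r : ℕ} (σ : Equiv.Perm (Fin r)) :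
    ((Equiv.Perm.sign σ : ℤ) : ℂ) * ((Equiv.Perm.sign σ : ℤ) : ℂ) = 1 := by
  rcases Int.units_eq_one_or (Equiv.Perm.sign σ) with h | h <;> rw [h] <;> norm_num

lemma gg_comp_perm (n : ℕ) {r : ℕ} (v t : Fin r → ℤ) (σ : Equiv.Perm (Fin r)) :
    gg n v (t ∘ σ) = gg n v t := by
  have h1 : Mm n v (t ∘ σ) = (Mm n v t).submatrix σ id := rfl
  have h2 : (starRingEnd ℂ) (((Equiv.Perm.sign σ : ℤ) : ℂ)) = ((Equiv.Perm.sign σ : ℤ) : ℂ) := by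
    simp
  rw [gg, gg, h1, Matrix.det_permute, map_mul, h2, mul_mul_mul_comm, sign_sq, one_mul]

lemma gg_eq_zero (n : ℕ) {r : ℕ} (v t : Fin r → ℤ) (h : ¬ Function.Injective t) :
    gg n v t = 0 := by
  rw [Function.not_injective_iff] at h
  obtain ⟨i, j, hij, hne⟩ := h
  have hd : (Mm n v t).det = 0 := by
    refine Matrix.det_zero_of_row_eq hne (funext fun l => ?_)
    show ee n (v l) ^ (t i) = ee n (v l) ^ (t j)
    rw [hij]
  rw [gg, hd]
  simp

lemma det_Mm (n : ℕ) {r : ℕ} (v t : Fin r → ℤ) :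
    (Mm n v t).det = ∑ σ : Equiv.Perm (Fin r),
      ((Equiv.Perm.sign σ : ℤ) : ℂ) * ∏ i, ee n (v (σ i)) ^ (t i) := by
  rw [← Matrix.det_transpose, Matrix.det_apply']
  rfl

lemma conj_det_Mm (n : ℕ) {r : ℕ} (v t : Fin r → ℤ) :
    (starRingEnd ℂ) (Mm n v t).det = ∑ σ : Equiv.Perm (Fin r),
      ((Equiv.Perm.sign σ : ℤ) : ℂ) * ∏ i, ee n (-(v (σ i))) ^ (t i) := by
  rw [det_Mm, map_sum]
  refine Finset.sum_congr rfl fun σ _ => ?_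
  rw [map_mul, map_prod]
  congr 1
  · simp
  · refine Finset.prod_congr rfl fun i _ => ?_
    rw [map_zpow₀, conj_ee]

def sFin (n : ℕ) {r : ℕ} : Fin r → Finset ℤ :=
  fun i => if (i : ℕ) = 0 then {(n : ℤ) - 1} else Finset.Icc 0 ((n : ℤ) - 1)

lemma perm_eq_of_eq_off_zero {r : ℕ} (σ τ : Equiv.Perm (Fin r))
    (h : ∀ i : Fin r, (i : ℕ) ≠ 0 → σ i = τ i) : σ = τ := by
  refine Equiv.ext fun i => ?_
  by_cases h0 : (i : ℕ) = 0
  · by_contra hne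
    set j := τ.symm (σ i) with hj
    have hτj : τ j = σ i := τ.apply_symm_apply _
    have hji : j ≠ i := by
      intro hh
      rw [hh] at hτj
      exact hne hτj.symm
    have hj0 : (j : ℕ) ≠ 0 := by
      intro hh
      exact hji (Fin.ext (by omega))
    have h1 : σ j = τ j := h j hj0
    have h2 : σ j = σ i := by rw [h1, hτj]
    exact hji (σ.injective h2)
  · exact h i h0

lemma sum_full (m k : ℕ) (v : Fin (m+1) → ℤ)
    (hv : Function.Injective v)
    (hlow : ∀ i, 0 ≤ v i) (hhigh : ∀ i, v i < ((m+1+k : ℕ) : ℤ)) :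
    ∑ t ∈ Fintype.piFinset (sFin (m+1+k)), gg (m+1+k) v t
      = ((m+1).factorial : ℂ) * ((m+1+k : ℕ) : ℂ) ^ m := by
  set n := m + 1 + k with hn
  have expand : ∀ t : Fin (m+1) → ℤ, gg n v t
      = ∑ σ : Equiv.Perm (Fin (m+1)), ∑ τ : Equiv.Perm (Fin (m+1)),
          (((Equiv.Perm.sign σ : ℤ) : ℂ) * ((Equiv.Perm.sign τ : ℤ) : ℂ))
            * ∏ i, ee n (v (σ i) - v (τ i)) ^ (t i) := by
    intro t
    rw [gg, conj_det_Mm, det_Mm, Finset.sum_mul_sum]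
    refine Finset.sum_congr rfl fun σ _ => Finset.sum_congr rfl fun τ _ => ?_
    rw [mul_mul_mul_comm, ← Finset.prod_mul_distrib]
    congr 1
    refine Finset.prod_congr rfl fun i _ => ?_
    rw [← mul_zpow, ee_mul, sub_eq_add_neg]
  rw [Finset.sum_congr rfl fun t _ => expand t, Finset.sum_comm]
  rw [Finset.sum_congr rfl fun σ (_ : σ ∈ Finset.univ) => Finset.sum_comm]
  have inner : ∀ σ τ : Equiv.Perm (Fin (m+1)),
      (∑ t ∈ Fintype.piFinset (sFin n),
        (((Equiv.Perm.sign σ : ℤ) : ℂ) * ((Equiv.Perm.sign τ : ℤ) : ℂ))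
          * ∏ i, ee n (v (σ i) - v (τ i)) ^ (t i))
      = if σ = τ then ((n : ℕ) : ℂ) ^ m else 0 := by
    intro σ τ
    rw [← Finset.mul_sum, ← Finset.prod_univ_sum]
    by_cases hστ : σ = τ
    · subst hστ
      rw [if_pos rfl, sign_sq]
      have hfac : ∀ i : Fin (m+1), (∑ b ∈ sFin n i, ee n (v (σ i) - v (σ i)) ^ b)
          = if (i : ℕ) = 0 then 1 else ((n : ℕ) : ℂ) := by
        intro i
        rw [sub_self, ee_zero, sFin]
        by_cases h0 : (i : ℕ) = 0
        · rw [if_pos h0, if_pos h0, Finset.sum_singleton, one_zpow]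
        · rw [if_neg h0, if_neg h0, sum_Icc_one]
      rw [Finset.prod_congr rfl fun i _ => hfac i, one_mul, Fin.prod_univ_succ]
      simp [Fin.val_succ, Finset.prod_const]
    · rw [if_neg hστ]
      have hex : ∃ i : Fin (m+1), (i : ℕ) ≠ 0 ∧ σ i ≠ τ i := by
        by_contra hc
        push_neg at hc
        exact hστ (perm_eq_of_eq_off_zero σ τ fun i hi => hc i hi)
      obtain ⟨i, hi0, hiστ⟩ := hex
      have hzero : (∑ b ∈ sFin n i, ee n (v (σ i) - v (τ i)) ^ b) = 0 := by
        rw [sFin, if_neg hi0]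
        refine sum_Icc_ee n _ (sub_ne_zero.2 (fun hh => hiστ (hv hh))) ?_
        rw [abs_lt]
        constructor <;>
          [linarith [hlow (σ i), hhigh (τ i)]; linarith [hhigh (σ i), hlow (τ i)]]
      rw [Finset.prod_eq_zero (Finset.mem_univ i) hzero, mul_zero]
  rw [Finset.sum_congr rfl fun σ (_ : σ ∈ Finset.univ) =>
    Finset.sum_congr rfl fun τ (_ : τ ∈ Finset.univ) => inner σ τ]
  rw [Finset.sum_congr rfl fun σ (_ : σ ∈ Finset.univ) =>
    Finset.sum_ite_eq Finset.univ σ (fun _ => ((n : ℕ) : ℂ) ^ m)]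
  simp only [Finset.mem_univ, if_pos, Finset.sum_const, Finset.card_univ, Fintype.card_perm,
    Fintype.card_fin, nsmul_eq_mul]

lemma card_stab (m : ℕ) :
    (Finset.univ.filter fun σ : Equiv.Perm (Fin (m+1)) => σ 0 = 0).card = m.factorial := by
  have h : (Finset.univ.filter fun σ : Equiv.Perm (Fin (m+1)) => σ 0 = 0).card
      = (Finset.univ : Finset (Equiv.Perm (Fin m))).card := by
    refine Finset.card_bij' (fun σ _ => (Equiv.Perm.decomposeFin σ).2)
      (fun π _ => Equiv.Perm.decomposeFin.symm (0, π)) (fun _ _ => Finset.mem_univ _)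
      ?_ ?_ ?_
    · intro π _
      simp only [Finset.mem_filter, Finset.mem_univ, true_and]
      exact Equiv.Perm.decomposeFin_symm_apply_zero 0 π
    · intro σ hσ
      simp only [Finset.mem_filter, Finset.mem_univ, true_and] at hσ
      have h1 : (Equiv.Perm.decomposeFin σ).1 = σ 0 := by
        conv_rhs => rw [← Equiv.symm_apply_apply Equiv.Perm.decomposeFin σ]
        rw [show (Equiv.Perm.decomposeFin σ : Fin (m+1) × Equiv.Perm (Fin m))
            = ((Equiv.Perm.decomposeFin σ).1, (Equiv.Perm.decomposeFin σ).2) from rfl]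
        rw [Equiv.Perm.decomposeFin_symm_apply_zero]
      have h2 : Equiv.Perm.decomposeFin σ
          = ((0 : Fin (m+1)), (Equiv.Perm.decomposeFin σ).2) := by
        refine Prod.ext ?_ rfl
        rw [h1, hσ]
      conv_rhs => rw [← Equiv.symm_apply_apply Equiv.Perm.decomposeFin σ, h2]
    · intro π _
      show (Equiv.Perm.decomposeFin (Equiv.Perm.decomposeFin.symm (0, π))).2 = π
      rw [Equiv.apply_symm_apply]
  rw [h, Finset.card_univ, Fintype.card_perm, Fintype.card_fin]

lemma strictAnti_gap_s4 {r : ℕ} (t : Fin r → ℤ) (h : ∀ i j : Fin r, i < j → t j < t i) :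
    ∀ (d : ℕ) (i j : Fin r), (j : ℕ) = (i : ℕ) + d →
      t j + ((j : ℕ) : ℤ) ≤ t i + ((i : ℕ) : ℤ) := by
  intro d
  induction d with
  | zero =>
    intro i j hij
    have : j = i := Fin.ext (by omega)
    subst this
    exact le_refl _
  | succ d ih =>
    intro i j hij
    have hj' : (i : ℕ) + d < r := by have := j.isLt; omega
    set j' : Fin r := ⟨(i : ℕ) + d, hj'⟩ with hj'def
    have h1 : t j < t j' := h j' j (by rw [Fin.lt_def]; show (i : ℕ) + d < (j : ℕ); omega)
    have h2 := ih i j' rfl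
    have h3 : ((j : ℕ) : ℤ) = (((j' : ℕ) : ℕ) : ℤ) + 1 := by
      show ((j : ℕ) : ℤ) = (((i : ℕ) + d : ℕ) : ℤ) + 1
      push_cast
      omega
    have h4 : (((j' : ℕ) : ℕ) : ℤ) = ((i : ℕ) + d : ℤ) := by push_cast; rfl
    omega

lemma sum_full_eq_dec (m k : ℕ) (v : Fin (m+1) → ℤ) :
    ∑ t ∈ Fintype.piFinset (sFin (m+1+k)), gg (m+1+k) v t
      = (m.factorial : ℂ) * ∑ t ∈ (Fintype.piFinset (sFin (m+1+k))).filter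
          (fun t => ∀ i j : Fin (m+1), i < j → t j < t i), gg (m+1+k) v t := by
  classical
  set n := m + 1 + k with hn
  set Dec := (Fintype.piFinset (sFin n)).filter
      (fun t => ∀ i j : Fin (m+1), i < j → t j < t i) with hDec
  set Stab := Finset.univ.filter (fun σ : Equiv.Perm (Fin (m+1)) => σ 0 = 0) with hStab
  have hn1 : 1 ≤ n := by omega
  have hbound : ∀ u : Fin (m+1) → ℤ, u ∈ Fintype.piFinset (sFin n) →
      ∀ i, 0 ≤ u i ∧ u i ≤ (n : ℤ) - 1 := by
    intro u hu i
    have := Fintype.mem_piFinset.1 hu i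
    rw [sFin] at this
    by_cases h0 : (i : ℕ) = 0
    · rw [if_pos h0, Finset.mem_singleton] at this
      constructor <;> omega
    · rw [if_neg h0, Finset.mem_Icc] at this
      exact this
  have hzero : ∀ u : Fin (m+1) → ℤ, u ∈ Fintype.piFinset (sFin n) → u 0 = (n : ℤ) - 1 := by
    intro u hu
    have := Fintype.mem_piFinset.1 hu 0
    rw [sFin] at this
    rw [if_pos (Fin.val_zero (m+1)), Finset.mem_singleton] at this
    exact this
  have h1 : ∑ t ∈ Fintype.piFinset (sFin n), gg n v t
      = ∑ t ∈ (Fintype.piFinset (sFin n)).filter (fun t => Function.Injective t), gg n v t :=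
    (Finset.sum_filter_of_ne (fun t _ hne => by
      by_contra hinj
      exact hne (gg_eq_zero n v t hinj))).symm
  rw [h1]
  have h2 : ∑ p ∈ Dec ×ˢ Stab, gg n v (p.1 ∘ p.2)
      = ∑ t ∈ (Fintype.piFinset (sFin n)).filter (fun t => Function.Injective t), gg n v t := by
    refine Finset.sum_bij (fun p _ => p.1 ∘ p.2) ?_ ?_ ?_ ?_
    · rintro ⟨t, σ⟩ hp
      rw [Finset.mem_product] at hp
      obtain ⟨ht, hσ⟩ := hp
      rw [hDec, Finset.mem_filter] at ht
      rw [hStab, Finset.mem_filter] at hσ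
      obtain ⟨htpi, htdec⟩ := ht
      obtain ⟨-, hσ0⟩ := hσ
      rw [Finset.mem_filter]
      refine ⟨Fintype.mem_piFinset.2 fun i => ?_, ?_⟩
      · show t (σ i) ∈ sFin n i
        by_cases h0 : (i : ℕ) = 0
        · have hi : i = 0 := Fin.ext h0
          subst hi
          rw [hσ0]
          exact Fintype.mem_piFinset.1 htpi 0
        · rw [sFin, if_neg h0, Finset.mem_Icc]
          exact hbound t htpi (σ i)
      · have hta : StrictAnti t := fun a b hab => htdec a b hab
        exact hta.injective.comp σ.injective
    · rintro ⟨t, σ⟩ hp ⟨u, τ⟩ hq hpq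
      simp only at hpq
      rw [Finset.mem_product, hDec, hStab, Finset.mem_filter, Finset.mem_filter] at hp hq
      have hta : StrictAnti t := fun a b hab => hp.1.2 a b hab
      have hua : StrictAnti u := fun a b hab => hq.1.2 a b hab
      have hrange : Set.range t = Set.range u := by
        have e1 : Set.range (t ∘ σ) = Set.range t := σ.surjective.range_comp t
        have e2 : Set.range (u ∘ τ) = Set.range u := τ.surjective.range_comp u
        rw [← e1, ← e2, hpq]
      have htu : t = u := by
        have hmt : StrictMono (fun i => -(t i)) := hta.neg
        have hmu : StrictMono (fun i => -(u i)) := hua.neg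
        have hr2 : Set.range (fun i => -(t i)) = Set.range (fun i => -(u i)) := by
          have e1 : Set.range (fun i => -(t i)) = Neg.neg '' Set.range t := Set.range_comp Neg.neg t
          have e2 : Set.range (fun i => -(u i)) = Neg.neg '' Set.range u := Set.range_comp Neg.neg u
          rw [e1, e2, hrange]
        haveI : WellFoundedLT (Fin (m+1)) := Finite.to_wellFoundedLT
        have := (hmt.range_inj hmu).1 hr2
        funext i
        have := congrFun this i
        simpa using this
      subst htu
      have hστ : σ = τ := by
        refine Equiv.ext fun i => ?_
        have := congrFun hpq i
        exact hta.injective this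
      rw [hστ]
    · intro u hu
      rw [Finset.mem_filter] at hu
      obtain ⟨hupi, huinj⟩ := hu
      set π := Tuple.sort u with hπ
      have hw : Monotone (u ∘ π) := Tuple.monotone_sort u
      have hws : StrictMono (u ∘ π) := hw.strictMono_of_injective (huinj.comp π.injective)
      set t : Fin (m+1) → ℤ := fun i => (u ∘ π) i.rev with htdef
      set σ : Equiv.Perm (Fin (m+1)) := π.symm.trans Fin.revPerm with hσdef
      have hcomp : t ∘ σ = u := by
        funext x
        show (u ∘ π) (Fin.rev (Fin.rev (π.symm x))) = u x
        rw [Fin.rev_rev]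
        exact congrArg u (π.apply_symm_apply x)
      have htanti : ∀ i j : Fin (m+1), i < j → t j < t i := by
        intro i j hij
        exact hws (by rwa [Fin.rev_lt_rev])
      have ht0 : t 0 = (n : ℤ) - 1 := by
        have hle1 : u 0 ≤ (u ∘ π) (Fin.last m) := by
          have : u 0 = (u ∘ π) (π.symm 0) := by
            show u 0 = u (π (π.symm 0))
            rw [π.apply_symm_apply]
          rw [this]
          exact hw (Fin.le_last _)
        have hle2 : (u ∘ π) (Fin.last m) ≤ (n : ℤ) - 1 := (hbound u hupi (π (Fin.last m))).2
        have hu0 : u 0 = (n : ℤ) - 1 := hzero u hupi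
        show (u ∘ π) (Fin.rev 0) = (n : ℤ) - 1
        rw [Fin.rev_zero]
        omega
      have htmem : t ∈ Dec := by
        rw [hDec, Finset.mem_filter]
        refine ⟨Fintype.mem_piFinset.2 fun i => ?_, htanti⟩
        rw [sFin]
        by_cases h0 : (i : ℕ) = 0
        · have : i = 0 := Fin.ext h0
          subst this
          rw [if_pos h0, Finset.mem_singleton]
          exact ht0
        · rw [if_neg h0, Finset.mem_Icc]
          exact hbound u hupi (π i.rev)
      have hσmem : σ ∈ Stab := by
        rw [hStab, Finset.mem_filter]
        refine ⟨Finset.mem_univ _, ?_⟩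
        have h1 : t (σ 0) = t 0 := by
          rw [ht0, ← hzero u hupi, ← hcomp]
          rfl
        have hta2 : StrictAnti t := fun a b hab => htanti a b hab
        exact hta2.injective h1
      exact ⟨⟨t, σ⟩, Finset.mem_product.2 ⟨htmem, hσmem⟩, hcomp⟩
    · intro p _
      rfl
  rw [← h2, Finset.sum_product]
  have h3 : ∀ t ∈ Dec, ∑ σ ∈ Stab, gg n v (t ∘ σ) = (m.factorial : ℂ) * gg n v t := by
    intro t _
    have : ∀ σ ∈ Stab, gg n v (t ∘ σ) = gg n v t := fun σ _ => gg_comp_perm n v t σ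
    rw [Finset.sum_congr rfl this, Finset.sum_const, hStab, card_stab, nsmul_eq_mul]
  rw [Finset.sum_congr rfl h3, ← Finset.mul_sum]

lemma zeta_eq (m k : ℕ) (v : Fin (m+1) → ℤ) (j : Fin (m+1)) :
    zeta (m+1) k v j = ee (m+1+k) (v j) := by
  rw [zeta, ee]
  congr 1
  push_cast
  ring

lemma sum_Pprime_eq_dec (m k : ℕ) (v : Fin (m+1) → ℤ) :
    ∑ μ ∈ (Pbar (m+1) k).filter
        (fun μ => ∀ i : Fin (m+1), (i : ℕ) = 0 → μ i = (k : ℤ)),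
      gg (m+1+k) v (fun i => μ i + (((m+1 : ℕ) : ℤ) - 1 - (i : ℕ)))
      = ∑ t ∈ (Fintype.piFinset (sFin (m+1+k))).filter
          (fun t => ∀ i j : Fin (m+1), i < j → t j < t i), gg (m+1+k) v t := by
  classical
  refine Finset.sum_nbij' (fun μ => (fun i => μ i + (((m+1 : ℕ) : ℤ) - 1 - (i : ℕ))))
    (fun t => (fun i => t i - (((m+1 : ℕ) : ℤ) - 1 - (i : ℕ)))) ?_ ?_ ?_ ?_ ?_
  · intro μ hμ
    rw [Finset.mem_filter, Pbar, Finset.mem_filter, Finset.mem_Icc] at hμ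
    obtain ⟨⟨⟨hμ0, hμk⟩, hmono⟩, htop⟩ := hμ
    have hb : ∀ i : Fin (m+1), 0 ≤ μ i ∧ μ i ≤ (k : ℤ) := fun i => ⟨hμ0 i, hμk i⟩
    have h00 : μ 0 = (k : ℤ) := htop 0 rfl
    rw [Finset.mem_filter]
    constructor
    · refine Fintype.mem_piFinset.2 fun i => ?_
      rw [sFin]
      by_cases h0 : (i : ℕ) = 0
      · have : i = 0 := Fin.ext h0
        subst this
        rw [if_pos h0, Finset.mem_singleton]
        push_cast
        omega
      · rw [if_neg h0, Finset.mem_Icc]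
        have := hb i
        have hi : (i : ℕ) ≤ m := by have := i.isLt; omega
        push_cast
        omega
    · intro i j hij
      have h1 : μ j ≤ μ i := hmono i j (le_of_lt hij)
      have h2 : (i : ℕ) < (j : ℕ) := hij
      have hj : (j : ℕ) ≤ m := by have := j.isLt; omega
      push_cast
      omega
  · intro t ht
    rw [Finset.mem_filter] at ht
    obtain ⟨hpi, hdec⟩ := ht
    have hgap : ∀ i j : Fin (m+1), i ≤ j → t j + ((j : ℕ) : ℤ) ≤ t i + ((i : ℕ) : ℤ) := by
      intro i j hij
      exact strictAnti_gap_s4 t hdec ((j : ℕ) - (i : ℕ)) i j (by omega)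
    have hbd : ∀ i : Fin (m+1), 0 ≤ t i ∧ t i ≤ ((m+1+k : ℕ) : ℤ) - 1 := by
      intro i
      have := Fintype.mem_piFinset.1 hpi i
      rw [sFin] at this
      by_cases h0 : (i : ℕ) = 0
      · rw [if_pos h0, Finset.mem_singleton] at this
        constructor <;> (push_cast at this ⊢) <;> omega
      · rw [if_neg h0, Finset.mem_Icc] at this
        exact this
    have ht0 : t 0 = ((m+1+k : ℕ) : ℤ) - 1 := by
      have := Fintype.mem_piFinset.1 hpi 0
      rw [sFin, if_pos (Fin.val_zero (m+1)), Finset.mem_singleton] at this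
      exact this
    have hlast : Fin.last m = (⟨m, by omega⟩ : Fin (m+1)) := rfl
    rw [Finset.mem_filter, Pbar, Finset.mem_filter, Finset.mem_Icc]
    refine ⟨⟨⟨fun i => ?_, fun i => ?_⟩, fun i j hij => ?_⟩, fun i hi => ?_⟩
    · -- 0 ≤ μ i
      show (0 : ℤ) ≤ t i - (((m+1 : ℕ) : ℤ) - 1 - (i : ℕ))
      have h1 := hgap i (Fin.last m) (Fin.le_last i)
      have h2 := (hbd (Fin.last m)).1
      have h3 : ((Fin.last m : ℕ) : ℤ) = (m : ℤ) := by rw [Fin.val_last]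
      push_cast at h1 h3 ⊢
      omega
    · -- μ i ≤ k
      show t i - (((m+1 : ℕ) : ℤ) - 1 - (i : ℕ)) ≤ (k : ℤ)
      have h1 := hgap 0 i (Fin.zero_le i)
      rw [ht0] at h1
      have h4 : (((0 : Fin (m+1)) : ℕ) : ℤ) = 0 := by norm_num
      push_cast at h1 h4 ⊢
      omega
    · -- antitone
      show t j - (((m+1 : ℕ) : ℤ) - 1 - (j : ℕ)) ≤ t i - (((m+1 : ℕ) : ℤ) - 1 - (i : ℕ))
      have h1 := hgap i j hij
      omega
    · -- μ i = k at i = 0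
      have : i = 0 := Fin.ext hi
      subst this
      show t 0 - (((m+1 : ℕ) : ℤ) - 1 - ((0 : Fin (m+1)) : ℕ)) = (k : ℤ)
      rw [ht0]
      have h4 : (((0 : Fin (m+1)) : ℕ) : ℤ) = 0 := by norm_num
      push_cast at h4 ⊢
      omega
  · intro μ _
    funext i
    ring
  · intro t _
    funext i
    ring
  · intro μ _
    rfl

lemma numerator_sum (m k : ℕ) (v : Fin (m+1) → ℤ)
    (hv : Function.Injective v)
    (hlow : ∀ i, 0 ≤ v i) (hhigh : ∀ i, v i < ((m+1+k : ℕ) : ℤ)) :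
    ∑ μ ∈ (Pbar (m+1) k).filter
        (fun μ => ∀ i : Fin (m+1), (i : ℕ) = 0 → μ i = (k : ℤ)),
      gg (m+1+k) v (fun i => μ i + (((m+1 : ℕ) : ℤ) - 1 - (i : ℕ)))
      = ((m+1 : ℕ) : ℂ) * ((m+1+k : ℕ) : ℂ) ^ m := by
  rw [sum_Pprime_eq_dec]
  have h1 := sum_full_eq_dec m k v
  have h2 := sum_full m k v hv hlow hhigh
  have hfac : ((m.factorial : ℕ) : ℂ) ≠ 0 := Nat.cast_ne_zero.2 (Nat.factorial_ne_zero m)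
  refine mul_left_cancel₀ hfac ?_
  rw [← h1, h2, Nat.factorial_succ]
  push_cast
  ring

lemma real_factor_id (a b : ℝ) :
    (Real.cos b - Real.cos a)^2 + (Real.sin b - Real.sin a)^2
      = (2 * Real.sin ((a - b)/2))^2 := by
  have h2 : Real.cos (a - b) = 2 * Real.cos ((a - b)/2)^2 - 1 := by
    have h := Real.cos_two_mul ((a - b)/2)
    rw [show 2 * ((a - b)/2) = a - b by ring] at h
    exact h
  linear_combination (Real.sin_sq_add_cos_sq a) + (Real.sin_sq_add_cos_sq b)
    + 2 * (Real.cos_sub a b) - 4 * (Real.sin_sq_add_cos_sq ((a - b)/2)) - 2 * h2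

lemma factor_eq (m k : ℕ) (v : Fin (m+1) → ℤ) (i j : Fin (m+1)) :
    (zeta (m+1) k v j - zeta (m+1) k v i) *
      (starRingEnd ℂ) (zeta (m+1) k v j - zeta (m+1) k v i)
      = (((2 * Real.sin (Real.pi * ((v i : ℝ) - (v j : ℝ))
          / (((m+1 : ℕ) : ℝ) + (k : ℝ)))) ^ 2 : ℝ) : ℂ) := by
  have hzeta : ∀ a : Fin (m+1), zeta (m+1) k v a
      = Complex.exp (((2 * Real.pi * (v a : ℝ) / (((m+1 : ℕ) : ℝ) + (k : ℝ)) : ℝ) : ℂ)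
          * Complex.I) := by
    intro a
    rw [zeta]
    congr 1
    push_cast
    ring
  set θ : Fin (m+1) → ℝ := fun a => 2 * Real.pi * (v a : ℝ) / (((m+1 : ℕ) : ℝ) + (k : ℝ))
    with hθ
  have hdiff : Complex.exp (((θ j : ℝ) : ℂ) * Complex.I)
        - Complex.exp (((θ i : ℝ) : ℂ) * Complex.I)
      = ((Real.cos (θ j) - Real.cos (θ i) : ℝ) : ℂ)
        + ((Real.sin (θ j) - Real.sin (θ i) : ℝ) : ℂ) * Complex.I := by
    rw [Complex.exp_mul_I, Complex.exp_mul_I, ← Complex.ofReal_cos, ← Complex.ofReal_sin,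
      ← Complex.ofReal_cos, ← Complex.ofReal_sin]
    push_cast
    ring
  rw [hzeta i, hzeta j, hdiff, Complex.mul_conj, Complex.normSq_add_mul_I]
  congr 1
  rw [real_factor_id (θ i) (θ j)]
  have harg : (θ i - θ j)/2
      = Real.pi * ((v i : ℝ) - (v j : ℝ)) / (((m+1 : ℕ) : ℝ) + (k : ℝ)) := by
    rw [hθ]
    ring
  rw [harg]

lemma prod_pairs {M : Type*} [CommMonoid M] {r : ℕ} (f : Fin r × Fin r → M) :
    ∏ p ∈ Finset.univ.filter (fun p : Fin r × Fin r => p.1 < p.2), f p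
      = ∏ i, ∏ j ∈ Finset.Ioi i, f (i, j) := by
  rw [show (∏ i : Fin r, ∏ j ∈ Finset.Ioi i, f (i, j))
      = ∏ x ∈ (Finset.univ : Finset (Fin r)).sigma (fun i => Finset.Ioi i), f (x.1, x.2) from
    (Finset.prod_sigma Finset.univ (fun i => Finset.Ioi i) (fun x => f (x.1, x.2))).symm]
  exact Finset.prod_nbij' (fun p => ⟨p.1, p.2⟩) (fun x => (x.1, x.2))
    (fun p hp => by
      rw [Finset.mem_filter] at hp
      rw [Finset.mem_sigma]
      exact ⟨Finset.mem_univ _, Finset.mem_Ioi.2 hp.2⟩)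
    (fun x hx => by
      rw [Finset.mem_sigma] at hx
      rw [Finset.mem_filter]
      exact ⟨Finset.mem_univ _, Finset.mem_Ioi.1 hx.2⟩)
    (fun p _ => rfl) (fun x _ => rfl) (fun p _ => rfl)

lemma denom_mul_conj (m k : ℕ) (v : Fin (m+1) → ℤ) :
    Matrix.det (Matrix.of fun i j : Fin (m+1) =>
        zeta (m+1) k v j ^ (((m+1 : ℕ) : ℤ) - 1 - (i : ℕ)))
      * (starRingEnd ℂ) (Matrix.det (Matrix.of fun i j : Fin (m+1) =>
        zeta (m+1) k v j ^ (((m+1 : ℕ) : ℤ) - 1 - (i : ℕ))))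
      = ((Dv (m+1) k v : ℝ) : ℂ) := by
  have hM : (Matrix.of fun i j : Fin (m+1) =>
      zeta (m+1) k v j ^ (((m+1 : ℕ) : ℤ) - 1 - (i : ℕ)))
      = Matrix.transpose ((Matrix.vandermonde (zeta (m+1) k v)).submatrix id Fin.revPerm) := by
    ext i j
    show zeta (m+1) k v j ^ (((m+1 : ℕ) : ℤ) - 1 - (i : ℕ))
      = Matrix.vandermonde (zeta (m+1) k v) j (Fin.revPerm i)
    rw [Matrix.vandermonde_apply, ← zpow_natCast]
    congr 1
    show ((m+1 : ℕ) : ℤ) - 1 - ((i : ℕ) : ℤ) = (((Fin.rev i : Fin (m+1)) : ℕ) : ℤ)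
    rw [Fin.val_rev]
    have := i.isLt
    omega
  have hconjsign :
      (starRingEnd ℂ) (((Equiv.Perm.sign (Fin.revPerm : Equiv.Perm (Fin (m+1)))) : ℤ) : ℂ)
        = (((Equiv.Perm.sign (Fin.revPerm : Equiv.Perm (Fin (m+1)))) : ℤ) : ℂ) := by
    simp
  rw [hM, Matrix.det_transpose, Matrix.det_permute', map_mul, hconjsign, mul_mul_mul_comm,
    sign_sq, one_mul, Matrix.det_vandermonde]
  have hsplit : (∏ i : Fin (m+1), ∏ j ∈ Finset.Ioi i, (zeta (m+1) k v j - zeta (m+1) k v i)) *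
      (starRingEnd ℂ) (∏ i : Fin (m+1), ∏ j ∈ Finset.Ioi i,
        (zeta (m+1) k v j - zeta (m+1) k v i))
      = ∏ i : Fin (m+1), ∏ j ∈ Finset.Ioi i,
          ((zeta (m+1) k v j - zeta (m+1) k v i) *
            (starRingEnd ℂ) (zeta (m+1) k v j - zeta (m+1) k v i)) := by
    rw [map_prod, ← Finset.prod_mul_distrib]
    refine Finset.prod_congr rfl fun i _ => ?_
    rw [map_prod, ← Finset.prod_mul_distrib]
  rw [hsplit,
    Finset.prod_congr rfl (fun i (_ : i ∈ Finset.univ) =>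
      Finset.prod_congr rfl (fun j (_ : j ∈ Finset.Ioi i) => factor_eq m k v i j))]
  rw [Dv, prod_pairs, Complex.ofReal_prod]
  exact (Finset.prod_congr rfl fun i _ => Complex.ofReal_prod _ _).symm


/-- summing over `P′_k = {μ ∈ P̄_k : μ_1 = k}` gives `r(r+k)^{r-1}/D(v)`. -/
theorem sum_P'_schur_normSq (r k : ℕ) (hr : 1 ≤ r) (hk : 1 ≤ k)
    (v : Fin r → ℤ) (hdec : ∀ i j : Fin r, i < j → v j < v i)
    (hlow : ∀ i, 0 ≤ v i) (hhigh : ∀ i, v i < (r : ℤ) + (k : ℤ)) :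
    ∑ μ ∈ (Pbar r k).filter (fun μ => ∀ i : Fin r, (i : ℕ) = 0 → μ i = (k : ℤ)),
        schur μ (zeta r k v) * (starRingEnd ℂ) (schur μ (zeta r k v)) =
      (r : ℂ) * ((r : ℂ) + (k : ℂ)) ^ (r - 1) / ((Dv r k v : ℝ) : ℂ) := by
  obtain ⟨m, rfl⟩ : ∃ m, r = m + 1 := ⟨r - 1, by omega⟩
  have hvinj : Function.Injective v := by
    intro a b hab
    by_contra hne
    rcases lt_or_gt_of_ne hne with h | h
    · exact (hdec a b h).ne hab.symm
    · exact (hdec b a h).ne hab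
  have hhigh' : ∀ i, v i < ((m+1+k : ℕ) : ℤ) := by
    intro i
    have := hhigh i
    push_cast at this ⊢
    omega
  have step1 : ∀ μ : Fin (m+1) → ℤ,
      schur μ (zeta (m+1) k v) * (starRingEnd ℂ) (schur μ (zeta (m+1) k v))
      = gg (m+1+k) v (fun i => μ i + (((m+1 : ℕ) : ℤ) - 1 - (i : ℕ)))
          / ((Dv (m+1) k v : ℝ) : ℂ) := by
    intro μ
    simp only [schur]
    rw [map_div₀, div_mul_div_comm, denom_mul_conj]
    congr 1
    have hnum : Matrix.det (Matrix.of fun i j : Fin (m+1) =>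
        zeta (m+1) k v j ^ (μ i + (((m+1 : ℕ) : ℤ) - 1 - (i : ℕ))))
        = (Mm (m+1+k) v (fun i => μ i + (((m+1 : ℕ) : ℤ) - 1 - (i : ℕ)))).det := by
      congr 1
      ext i j
      show zeta (m+1) k v j ^ (μ i + (((m+1 : ℕ) : ℤ) - 1 - (i : ℕ)))
        = ee (m+1+k) (v j) ^ (μ i + (((m+1 : ℕ) : ℤ) - 1 - (i : ℕ)))
      rw [zeta_eq]
    rw [hnum]
    rfl
  rw [Finset.sum_congr rfl (fun μ _ => step1 μ), ← Finset.sum_div]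
  rw [numerator_sum m k v hvinj hlow hhigh']
  rw [show ((m+1+k : ℕ) : ℂ) = ((m+1 : ℕ) : ℂ) + (k : ℂ) by push_cast; ring]
  rw [show m + 1 - 1 = m from rfl]
end VerlindePaper
end
end

section
/- For every μ ∈ P̄_k and every integer vector v = (v_1,…,v_r) whose entries are pairwise distinct modulo r+k, one has S_{μ*}(ζ_v) = conj(S_μ(ζ_v)) · exp(2πik|v|/(r+k)). -/
open scoped BigOperators
open Complex

noncomputable section

namespace VerlindePaper

/-- `S_{μ*}(ζ_v) = conj(S_μ(ζ_v)) · e^{2πik|v|/(r+k)}`. -/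
theorem schur_star_eq_conj_mul_exp (r k : ℕ) (hr : 1 ≤ r) (hk : 1 ≤ k)
    (μ : Fin r → ℤ) (hμ : μ ∈ Pbar r k) (v : Fin r → ℤ)
    (hdist : ∀ i j : Fin r, i ≠ j → ¬ (((r : ℤ) + (k : ℤ)) ∣ (v i - v j))) :
    schur (mustar k μ) (zeta r k v) =
      (starRingEnd ℂ) (schur μ (zeta r k v)) *
        Complex.exp (2 * (Real.pi : ℂ) * Complex.I * (k : ℂ) * (∑ i, (v i : ℂ)) /
          ((r : ℂ) + (k : ℂ))) := by
  classical
  simp only [schur]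
  set z : Fin r → ℂ := zeta r k v with hzdef
  have hn : ((r : ℂ) + (k : ℂ)) ≠ 0 := by
    have h1 : ((r + k : ℕ) : ℂ) ≠ 0 := Nat.cast_ne_zero.mpr (by omega)
    push_cast at h1; exact h1
  have htpi : (2 * (Real.pi : ℂ) * Complex.I) ≠ 0 := by
    simp [Real.pi_ne_zero, Complex.I_ne_zero, Complex.ofReal_ne_zero]
  have hz0 : ∀ j, z j ≠ 0 := fun j => Complex.exp_ne_zero _
  have hz : ∀ (j : Fin r) (m : ℤ), z j ^ m =
      Complex.exp (2 * (Real.pi : ℂ) * Complex.I * (v j : ℂ) * (m : ℂ) / ((r : ℂ) + (k : ℂ))) := by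
    intro j m
    rw [hzdef]
    simp only [zeta]
    rw [← Complex.exp_int_mul]
    congr 1
    ring
  have hone : ∀ j : Fin r, z j ^ ((r : ℤ) + (k : ℤ)) = 1 := by
    intro j
    rw [hz]
    have he : 2 * (Real.pi : ℂ) * Complex.I * (v j : ℂ) * (((r : ℤ) + (k : ℤ) : ℤ) : ℂ) /
        ((r : ℂ) + (k : ℂ)) = (v j : ℂ) * (2 * (Real.pi : ℂ) * Complex.I) := by
      push_cast
      field_simp
    rw [he, Complex.exp_int_mul_two_pi_mul_I]
  have hshift : ∀ (j : Fin r) (a b : ℤ), a = b + ((r : ℤ) + (k : ℤ)) → z j ^ a = z j ^ b := by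
    intro j a b hab
    rw [hab, zpow_add₀ (hz0 j), hone, mul_one]
  have hconj : ∀ (j : Fin r) (m : ℤ), (starRingEnd ℂ) (z j ^ m) = z j ^ (-m) := by
    intro j m
    rw [hz, hz, ← Complex.exp_conj]
    congr 1
    simp only [map_div₀, map_mul, Complex.conj_I, Complex.conj_ofReal, map_intCast, map_natCast,
      map_ofNat, map_add]
    push_cast
    ring
  have hzinj : Function.Injective z := by
    intro i j hij
    by_contra hne
    rw [hzdef] at hij
    simp only [zeta] at hij
    rw [Complex.exp_eq_exp_iff_exists_int] at hij
    obtain ⟨m, hm⟩ := hij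
    apply hdist i j hne
    refine ⟨m, ?_⟩
    have hm' : (2 * (Real.pi : ℂ) * Complex.I) * ((v i : ℂ)) =
        (2 * (Real.pi : ℂ) * Complex.I) * ((v j : ℂ) + (m : ℂ) * ((r : ℂ) + (k : ℂ))) := by
      field_simp at hm
      linear_combination (2 * (Real.pi : ℂ) * Complex.I) * hm
    have hc := mul_left_cancel₀ htpi hm'
    have : ((v i - v j : ℤ) : ℂ) = (((r : ℤ) + (k : ℤ)) * m : ℤ) := by
      push_cast
      linear_combination hc
    exact_mod_cast this
  -- the sign of the reversal permutation
  set ε : ℂ := ((Equiv.Perm.sign (Fin.revPerm : Equiv.Perm (Fin r)) : ℤ) : ℂ) with hεdef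
  have hε : ε * ε = 1 := by
    rw [hεdef, ← Int.cast_mul, ← Units.val_mul, Int.units_mul_self, Units.val_one, Int.cast_one]
  have hε0 : ε ≠ 0 := by
    intro h
    rw [h, mul_zero] at hε
    exact zero_ne_one hε
  -- matrices
  set Nmu : Matrix (Fin r) (Fin r) ℂ :=
    Matrix.of (fun i j : Fin r => z j ^ (μ i + ((r : ℤ) - 1 - (i : ℕ)))) with hNmu
  set Nstar : Matrix (Fin r) (Fin r) ℂ :=
    Matrix.of (fun i j : Fin r => z j ^ (mustar k μ i + ((r : ℤ) - 1 - (i : ℕ)))) with hNstar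
  set Dm : Matrix (Fin r) (Fin r) ℂ :=
    Matrix.of (fun i j : Fin r => z j ^ ((r : ℤ) - 1 - (i : ℕ))) with hDm
  -- the denominator is nonzero (Vandermonde)
  have hDne : Dm.det ≠ 0 := by
    have hDsub : Dm = (Matrix.transpose (Matrix.vandermonde z)).submatrix (Fin.revPerm : Equiv.Perm (Fin r)) id := by
      ext i j
      simp only [hDm, Matrix.of_apply, Matrix.submatrix_apply, Matrix.transpose_apply,
        Matrix.vandermonde, Fin.revPerm_apply, id_eq, Matrix.of_apply]
      have h2 := i.isLt
      have he : ((r : ℤ) - 1 - (i : ℕ)) = (((i.rev : Fin r) : ℕ) : ℤ) := by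
        rw [Fin.val_rev]
        omega
      rw [he, zpow_natCast]
    rw [hDsub, Matrix.det_permute, Matrix.det_transpose]
    refine mul_ne_zero ?_ ?_
    · rw [← hεdef]; exact hε0
    · rw [Matrix.det_vandermonde_ne_zero_iff]
      exact hzinj
  -- numerator relation
  have hA : Nstar.det = ε * (∏ j, z j ^ (-1 : ℤ)) * (starRingEnd ℂ) Nmu.det := by
    rw [RingHom.map_det, RingHom.mapMatrix_apply]
    have hmap : Nmu.map (starRingEnd ℂ) =
        Matrix.of (fun i j : Fin r => z j ^ (-(μ i + ((r : ℤ) - 1 - (i : ℕ))))) := by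
      ext i j
      exact hconj j _
    rw [hmap]
    have key : Nstar = Matrix.of (fun i j : Fin r => (z j ^ (-1 : ℤ)) *
        ((Matrix.of (fun i j : Fin r => z j ^ (-(μ i + ((r : ℤ) - 1 - (i : ℕ)))))).submatrix
          (Fin.revPerm : Equiv.Perm (Fin r)) id) i j) := by
      ext i j
      simp only [hNstar, Matrix.of_apply, Matrix.submatrix_apply, Fin.revPerm_apply, id_eq]
      rw [← zpow_add₀ (hz0 j)]
      apply hshift
      simp only [mustar, Fin.rev_rev]
      have h2 := i.isLt
      have h3 : ((i.rev : Fin r) : ℕ) = r - ((i : ℕ) + 1) := Fin.val_rev i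
      rw [h3]
      omega
    rw [key, Matrix.det_mul_row, Matrix.det_permute]
    rw [← hεdef]
    ring
  -- denominator relation
  have hB : (starRingEnd ℂ) Dm.det = ε * (∏ j, z j ^ (1 - (r : ℤ))) * Dm.det := by
    rw [RingHom.map_det, RingHom.mapMatrix_apply]
    have hmap : Dm.map (starRingEnd ℂ) =
        Matrix.of (fun i j : Fin r => z j ^ (-((r : ℤ) - 1 - (i : ℕ)))) := by
      ext i j
      exact hconj j _
    rw [hmap]
    have key : (Matrix.of (fun i j : Fin r => z j ^ (-((r : ℤ) - 1 - (i : ℕ))))).submatrix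
        (Fin.revPerm : Equiv.Perm (Fin r)) id =
        Matrix.of (fun i j : Fin r => (z j ^ (1 - (r : ℤ))) * Dm i j) := by
      ext i j
      simp only [Matrix.of_apply, Matrix.submatrix_apply, Fin.revPerm_apply, id_eq, hDm]
      rw [← zpow_add₀ (hz0 j)]
      congr 1
      have h2 := i.isLt
      have h3 : ((i.rev : Fin r) : ℕ) = r - ((i : ℕ) + 1) := Fin.val_rev i
      rw [h3]
      omega
    have hdp := Matrix.det_permute (Fin.revPerm : Equiv.Perm (Fin r))
      (Matrix.of (fun i j : Fin r => z j ^ (-((r : ℤ) - 1 - (i : ℕ)))))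
    rw [key, Matrix.det_mul_row] at hdp
    rw [← hεdef] at hdp
    calc (Matrix.of (fun i j : Fin r => z j ^ (-((r : ℤ) - 1 - (i : ℕ))))).det
        = ε * (ε * (Matrix.of (fun i j : Fin r => z j ^ (-((r : ℤ) - 1 - (i : ℕ))))).det) := by
          rw [← mul_assoc, hε, one_mul]
      _ = ε * ((∏ j, z j ^ (1 - (r : ℤ))) * Dm.det) := by rw [← hdp]
      _ = ε * (∏ j, z j ^ (1 - (r : ℤ))) * Dm.det := by ring
  -- the product identity
  have hPE : (∏ j, z j ^ (-1 : ℤ)) * (∏ j, z j ^ (1 - (r : ℤ))) =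
      Complex.exp (2 * (Real.pi : ℂ) * Complex.I * (k : ℂ) * (∑ i, (v i : ℂ)) /
        ((r : ℂ) + (k : ℂ))) := by
    rw [← Finset.prod_mul_distrib]
    have h1 : ∀ j : Fin r, z j ^ (-1 : ℤ) * z j ^ (1 - (r : ℤ)) =
        Complex.exp ((2 * (Real.pi : ℂ) * Complex.I * (-(r : ℂ)) / ((r : ℂ) + (k : ℂ))) * (v j : ℂ)) := by
      intro j
      rw [← zpow_add₀ (hz0 j)]
      have he : (-1 : ℤ) + (1 - (r : ℤ)) = -(r : ℤ) := by ring
      rw [he, hz]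
      congr 1
      push_cast
      ring
    simp_rw [h1]
    rw [← Complex.exp_sum, ← Finset.mul_sum]
    rw [Complex.exp_eq_exp_iff_exists_int]
    refine ⟨-(∑ i, v i), ?_⟩
    have hS : (∑ i, ((v i : ℤ) : ℂ)) = ((∑ i, v i : ℤ) : ℂ) := by push_cast; ring
    rw [hS]
    push_cast
    field_simp
    ring
  -- assemble
  rw [map_div₀, hA, hB]
  rw [div_mul_eq_mul_div, div_eq_div_iff hDne (by
    exact mul_ne_zero (mul_ne_zero hε0 (Finset.prod_ne_zero_iff.mpr (fun j _ => zpow_ne_zero _ (hz0 j)))) hDne)]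
  linear_combination ((starRingEnd ℂ) Nmu.det * Dm.det * (∏ j, z j ^ (-1 : ℤ)) *
      (∏ j, z j ^ (1 - (r : ℤ)))) * hε +
    ((starRingEnd ℂ) Nmu.det * Dm.det) * hPE
end VerlindePaper
end
end

section
/- Let (λ_x)_{x∈I} be a finite family of vectors in P̄_k. If r does not divide Σ_{x∈I}|λ_x|, then the genus-zero Verlinde number vanishes: V_0(r,0,(λ_x)_{x∈I}) = 0. -/
open scoped BigOperators
open Complex

noncomputable section

namespace VerlindePaper

lemma prod_zpow_eq {ι : Type*} (s : Finset ι) (a : ℂ) (ha : a ≠ 0) (f : ι → ℤ) :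
    ∏ i ∈ s, a ^ f i = a ^ (∑ i ∈ s, f i) := by
  classical
  induction s using Finset.induction_on with
  | empty => simp
  | insert _ _ h ih => rw [Finset.prod_insert h, Finset.sum_insert h, zpow_add₀ ha, ih]

lemma schur_mul_perm {r : ℕ} (lam : Fin r → ℤ) (z : Fin r → ℂ) (ω : ℂ) (hω : ω ≠ 0)
    (e : Equiv.Perm (Fin r)) :
    schur lam (fun j => ω * z (e j)) = ω ^ (∑ i, lam i) * schur lam z := by
  have key : ∀ f : Fin r → ℤ, (Matrix.of fun i j : Fin r => (ω * z (e j)) ^ (f i)).det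
      = ω ^ (∑ i, f i) * (((Equiv.Perm.sign e : ℤ) : ℂ) *
        (Matrix.of fun i j : Fin r => z j ^ (f i)).det) := by
    intro f
    have h1 : (Matrix.of fun i j : Fin r => (ω * z (e j)) ^ (f i))
        = Matrix.of fun i j => ω ^ (f i) *
          ((Matrix.of fun i' j' : Fin r => z j' ^ (f i')).submatrix id e) i j := by
      ext i j
      simp [Matrix.submatrix, mul_zpow]
    rw [h1, Matrix.det_mul_column, Matrix.det_permute', prod_zpow_eq _ _ hω]
  have hs : (((Equiv.Perm.sign e : ℤ) : ℂ)) ≠ 0 := by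
    rcases Int.units_eq_one_or (Equiv.Perm.sign e) with h | h <;> simp [h]
  unfold schur
  rw [key, key, mul_div_mul_comm, mul_div_mul_comm, div_self hs, one_mul,
    ← zpow_sub₀ hω]
  congr 2
  rw [← Finset.sum_sub_distrib]
  simp

lemma mem_Vset {r k : ℕ} {v : Fin r → ℤ} : v ∈ Vset r k ↔
    (∀ i, 0 ≤ v i) ∧ (∀ i, v i ≤ (r:ℤ) + (k:ℤ) - 1) ∧
    (∀ i j : Fin r, i < j → v j < v i) ∧ (∀ i : Fin r, (i:ℕ) = r - 1 → v i = 0) := by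
  simp only [Vset, Finset.mem_filter, Finset.mem_Icc, Pi.le_def]
  constructor
  · rintro ⟨⟨h1, h2⟩, h3, h4⟩; exact ⟨fun i => h1 i, fun i => h2 i, h3, h4⟩
  · rintro ⟨h1, h2, h3, h4⟩; exact ⟨⟨h1, h2⟩, h3, h4⟩

/-- The rotation map on `Vset (m+2) k`. -/
def Tr (m k : ℕ) (v : Fin (m+2) → ℤ) : Fin (m+2) → ℤ := fun j =>
  if j = Fin.last (m+1) then 0 else v (j+1) + ((m:ℤ) + 2 + k) - v 0

def Trinv (m k : ℕ) (u : Fin (m+2) → ℤ) : Fin (m+2) → ℤ := fun i =>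
  if i = 0 then ((m:ℤ) + 2 + k) - u ⟨m, by omega⟩ else u (i-1) - u ⟨m, by omega⟩

section
variable {m k : ℕ} {v u : Fin (m+2) → ℤ}

lemma lt_of_ne_zero {i : Fin (m+2)} (h : i ≠ 0) : (0 : Fin (m+2)) < i := by
  simp only [Fin.lt_def, Fin.val_zero]
  exact Nat.pos_of_ne_zero (fun hc => h (Fin.ext (by simpa using hc)))

lemma succ_lt_of_lt {i j : Fin (m+2)} (hij : i < j) (hj : j ≠ Fin.last (m+1)) :
    i + 1 < j + 1 := by
  have hi : i ≠ Fin.last (m+1) := Fin.ne_last_of_lt hij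
  simp only [Fin.lt_def] at hij ⊢
  rw [Fin.val_add_one, if_neg hi, Fin.val_add_one, if_neg hj]
  omega

lemma zero_lt_succ {i : Fin (m+2)} (hi : i ≠ Fin.last (m+1)) : (0 : Fin (m+2)) < i + 1 := by
  simp only [Fin.lt_def, Fin.val_zero]
  rw [Fin.val_add_one, if_neg hi]
  omega

lemma vlast (hv : v ∈ Vset (m+2) k) : v (Fin.last (m+1)) = 0 :=
  (mem_Vset.mp hv).2.2.2 _ (by simp)

lemma vzero_pos (hv : v ∈ Vset (m+2) k) : 0 < v 0 := by
  have h := (mem_Vset.mp hv).2.2.1 0 (Fin.last (m+1))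
    (by simp only [Fin.lt_def, Fin.val_zero, Fin.val_last]; omega)
  rw [vlast hv] at h; exact h

lemma Tr_mem (hv : v ∈ Vset (m+2) k) : Tr m k v ∈ Vset (m+2) k := by
  obtain ⟨h0, h1, h2, _⟩ := mem_Vset.mp hv
  have hN : v 0 ≤ ((m+2:ℕ):ℤ) + k - 1 := h1 0
  refine mem_Vset.mpr ⟨?_, ?_, ?_, ?_⟩
  · intro i
    unfold Tr; split
    · exact le_refl _
    · have := h0 (i+1); push_cast at hN ⊢; omega
  · intro i
    unfold Tr; split
    · have := vzero_pos hv; push_cast; omega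
    · rename_i hne
      have hlt : v (i+1) < v 0 := h2 0 (i+1) (zero_lt_succ hne)
      push_cast; omega
  · intro i j hij
    unfold Tr
    have hine : i ≠ Fin.last (m+1) := Fin.ne_last_of_lt hij
    rw [if_neg hine]
    split
    · have := h0 (i+1)
      have hlt : v (i+1) < v 0 := h2 0 (i+1) (zero_lt_succ hine)
      push_cast at hN ⊢; omega
    · rename_i hjne
      have : v (j+1) < v (i+1) := h2 _ _ (succ_lt_of_lt hij hjne)
      omega
  · intro i hi
    have : i = Fin.last (m+1) := Fin.ext (by simpa using hi)
    simp [Tr, this]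

lemma Trinv_mem (hu : u ∈ Vset (m+2) k) : Trinv m k u ∈ Vset (m+2) k := by
  obtain ⟨h0, h1, h2, _⟩ := mem_Vset.mp hu
  have hm_lt_last : (⟨m, by omega⟩ : Fin (m+2)) < Fin.last (m+1) := by
    simp [Fin.lt_def]
  have hum_pos : 0 < u ⟨m, by omega⟩ := by
    have := h2 _ _ hm_lt_last; rw [vlast hu] at this; exact this
  have hmono : ∀ i j : Fin (m+2), i ≤ j → u j ≤ u i := by
    intro i j hij
    rcases eq_or_lt_of_le hij with rfl | h
    · exact le_refl _
    · exact le_of_lt (h2 _ _ h)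
  refine mem_Vset.mpr ⟨?_, ?_, ?_, ?_⟩
  · intro i
    unfold Trinv; split
    · have := h1 ⟨m, by omega⟩; push_cast at this ⊢; omega
    · rename_i hne
      have : u ⟨m, by omega⟩ ≤ u (i - 1) := by
        apply hmono
        simp only [Fin.le_def, Fin.coe_sub_one, if_neg hne]
        have := i.isLt; omega
      omega
  · intro i
    unfold Trinv; split
    · push_cast; omega
    · have ha := h1 (i-1); have hb := h0 0
      have : u (i-1) ≤ u 0 := hmono 0 (i-1) (Fin.zero_le _)
      push_cast at ha ⊢; omega
  · intro i j hij
    unfold Trinv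
    have hjne : j ≠ 0 := by
      intro hc; rw [hc] at hij; exact absurd hij (by simp [Fin.lt_def])
    rw [if_neg hjne]
    split
    · have := h1 (j-1); push_cast at this ⊢; omega
    · rename_i hine
      have : u (j-1) < u (i-1) := by
        apply h2
        simp only [Fin.lt_def, Fin.coe_sub_one, if_neg hine, if_neg hjne]
        simp only [Fin.lt_def] at hij
        have := Nat.pos_of_ne_zero (fun (hc : (i:ℕ) = 0) => hine (Fin.ext (by simpa using hc)))
        omega
      omega
  · intro i hi
    have hlast : i = Fin.last (m+1) := Fin.ext (by simpa using hi)
    have hne : i ≠ 0 := by rw [hlast]; exact (Fin.last_pos).ne'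
    have : i - 1 = (⟨m, by omega⟩ : Fin (m+2)) := by
      apply Fin.ext
      simp [Fin.coe_sub_one, if_neg hne, hlast]
    simp [Trinv, if_neg hne, this]

lemma Trinv_Tr (hv : v ∈ Vset (m+2) k) : Trinv m k (Tr m k v) = v := by
  obtain ⟨h0, h1, h2, _⟩ := mem_Vset.mp hv
  have hmne : (⟨m, by omega⟩ : Fin (m+2)) ≠ Fin.last (m+1) := by
    intro hc; have := Fin.val_eq_val .. |>.mpr hc; simp at this
  have hTm : Tr m k v ⟨m, by omega⟩ = ((m:ℤ) + 2 + k) - v 0 := by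
    have hsucc : (⟨m, by omega⟩ : Fin (m+2)) + 1 = Fin.last (m+1) := by
      apply Fin.ext; rw [Fin.val_add_one, if_neg hmne]; simp
    rw [Tr, if_neg hmne, hsucc, vlast hv]; ring
  funext i
  rcases eq_or_ne i 0 with rfl | hne
  · rw [Trinv, if_pos rfl, hTm]; ring
  · rw [Trinv, if_neg hne, hTm]
    rcases eq_or_ne (i-1) (Fin.last (m+1)) with hl | hl
    · have : i = 0 := by
        have := congrArg Fin.val hl
        rw [Fin.coe_sub_one, if_neg hne] at this
        have hi := i.isLt
        simp only [Fin.val_last] at this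
        exact absurd (Fin.ext (by omega : (i:ℕ) = (0 : Fin (m+2)).val)) hne
      exact absurd this hne
    · rw [Tr, if_neg hl, sub_add_cancel]
      ring

lemma Tr_Trinv (hu : u ∈ Vset (m+2) k) : Tr m k (Trinv m k u) = u := by
  funext j
  rcases eq_or_ne j (Fin.last (m+1)) with rfl | hne
  · rw [Tr, if_pos rfl, vlast hu]
  · have hj1 : j + 1 ≠ 0 := by
      intro hc
      have := congrArg Fin.val hc
      rw [Fin.val_add_one, if_neg hne] at this
      simp at this
    rw [Tr, if_neg hne, Trinv, Trinv, if_pos rfl, if_neg hj1, add_sub_cancel_right]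
    ring

lemma sum_Tr (hv : v ∈ Vset (m+2) k) :
    ∑ j, Tr m k v j = ∑ j, v j - ((m:ℤ)+2) * v 0 + ((m:ℤ)+1) * ((m:ℤ)+2+(k:ℤ)) := by
  have hrw : ∀ j, Tr m k v j = v (finRotate (m+2) j) + ((m:ℤ)+2+(k:ℤ) - v 0)
      - (if j = Fin.last (m+1) then ((m:ℤ)+2+(k:ℤ)) else 0) := by
    intro j
    rcases eq_or_ne j (Fin.last (m+1)) with rfl | hne
    · rw [Tr, if_pos rfl, if_pos rfl, finRotate_succ_apply, Fin.last_add_one]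
      ring
    · rw [Tr, if_neg hne, if_neg hne, finRotate_succ_apply]
      ring
  rw [Finset.sum_congr rfl (fun j _ => hrw j), Finset.sum_sub_distrib,
    Finset.sum_add_distrib, Finset.sum_const, Equiv.sum_comp (finRotate (m+2)) v,
    Finset.sum_ite_eq' Finset.univ (Fin.last (m+1)) (fun _ => ((m:ℤ)+2+(k:ℤ)))]
  simp only [Finset.mem_univ, if_pos, Finset.card_univ, Fintype.card_fin, nsmul_eq_mul]
  push_cast
  ring

lemma Ncomplex_ne_zero : (((m+2:ℕ) : ℂ)) + (k : ℂ) ≠ 0 := by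
  have h : ((m+2+k:ℕ):ℂ) ≠ 0 := Nat.cast_ne_zero.mpr (by omega)
  push_cast at h ⊢
  intro hc
  exact h (by linear_combination hc)

lemma zeta_Tr (hv : v ∈ Vset (m+2) k) (j : Fin (m+2)) :
    zeta (m+2) k (Tr m k v) j =
      Complex.exp (2 * (Real.pi:ℂ) * Complex.I * ((((m:ℤ)+2+(k:ℤ) - v 0 : ℤ)) : ℂ) /
        (((m+2:ℕ) : ℂ) + (k : ℂ))) * zeta (m+2) k v (finRotate (m+2) j) := by
  have hN : (((m+2:ℕ) : ℂ)) + (k : ℂ) ≠ 0 := Ncomplex_ne_zero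
  unfold zeta
  rw [← Complex.exp_add]
  rcases eq_or_ne j (Fin.last (m+1)) with rfl | hne
  · rw [Tr, if_pos rfl, finRotate_succ_apply, Fin.last_add_one]
    have harg : 2 * (Real.pi:ℂ) * Complex.I * ((((m:ℤ)+2+(k:ℤ) - v 0 : ℤ)) : ℂ) /
        (((m+2:ℕ) : ℂ) + (k : ℂ)) +
        2 * (Real.pi:ℂ) * Complex.I * ((v 0 : ℂ)) / (((m+2:ℕ) : ℂ) + (k : ℂ)) =
        2 * (Real.pi:ℂ) * Complex.I := by
      rw [← add_div, div_eq_iff hN]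
      push_cast
      ring
    rw [harg]
    simp [Complex.exp_two_pi_mul_I]
  · rw [Tr, if_neg hne, finRotate_succ_apply]
    congr 1
    rw [← add_div]
    congr 1
    push_cast
    ring

lemma Dv_Tr (hv : v ∈ Vset (m+2) k) : Dv (m+2) k (Tr m k v) = Dv (m+2) k v := by
  classical
  unfold Dv
  have hNpos : (0:ℝ) < ((m+2:ℕ):ℝ) + k := by positivity
  refine Finset.prod_nbij'
    (fun p => if p.2 = Fin.last (m+1) then ((0 : Fin (m+2)), p.1+1) else (p.1+1, p.2+1))
    (fun p => if p.1 = 0 then (p.2-1, Fin.last (m+1)) else (p.1-1, p.2-1))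
    ?_ ?_ ?_ ?_ ?_
  · -- maps to
    rintro ⟨a, b⟩ hab
    simp only [Finset.mem_filter, Finset.mem_univ, true_and] at hab ⊢
    have ha : a ≠ Fin.last (m+1) := Fin.ne_last_of_lt hab
    split
    · exact zero_lt_succ ha
    · rename_i hb
      exact succ_lt_of_lt hab hb
  · -- maps back
    rintro ⟨a, b⟩ hab
    simp only [Finset.mem_filter, Finset.mem_univ, true_and] at hab ⊢
    split
    · rename_i ha
      subst ha
      simp only [Fin.lt_def, Fin.coe_sub_one, Fin.val_last]
      have hbne : b ≠ 0 := by
        intro hc; rw [hc] at hab; exact lt_irrefl _ hab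
      rw [if_neg hbne]
      have := b.isLt; omega
    · rename_i ha
      simp only [Fin.lt_def, Fin.coe_sub_one, if_neg ha]
      have hbne : b ≠ 0 := by
        intro hc
        rw [hc] at hab
        exact absurd hab (by simp [Fin.lt_def])
      rw [if_neg hbne]
      simp only [Fin.lt_def] at hab
      have hapos := Nat.pos_of_ne_zero (fun (hc : (a:ℕ) = 0) => ha (Fin.ext (by simpa using hc)))
      omega
  · -- left inverse
    rintro ⟨a, b⟩ hab
    simp only [Finset.mem_filter, Finset.mem_univ, true_and] at hab
    have ha : a ≠ Fin.last (m+1) := Fin.ne_last_of_lt hab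
    dsimp only
    split
    · rename_i hb
      subst hb
      rw [if_pos rfl]
      simp [add_sub_cancel_right]
    · rename_i hb
      have h1 : a + 1 ≠ 0 := by
        intro hc
        have := congrArg Fin.val hc
        rw [Fin.val_add_one, if_neg ha] at this
        simp at this
      rw [if_neg h1]
      simp [add_sub_cancel_right]
  · -- right inverse
    rintro ⟨a, b⟩ hab
    simp only [Finset.mem_filter, Finset.mem_univ, true_and] at hab
    dsimp only
    split
    · rename_i ha
      subst ha
      have hbne : b ≠ 0 := by
        intro hc; rw [hc] at hab; exact lt_irrefl _ hab
      have hb1 : b - 1 + 1 = b := by rw [sub_add_cancel]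
      rw [if_pos rfl, hb1]
    · rename_i ha
      have hbne : b ≠ 0 := by
        intro hc
        rw [hc] at hab
        exact absurd hab (by simp [Fin.lt_def])
      have hb1 : b - 1 ≠ Fin.last (m+1) := by
        intro hc
        have := congrArg Fin.val hc
        rw [Fin.coe_sub_one, if_neg hbne] at this
        have := b.isLt
        simp only [Fin.val_last] at *
        omega
      rw [if_neg hb1]
      simp [sub_add_cancel]
  · -- values agree
    rintro ⟨a, b⟩ hab
    simp only [Finset.mem_filter, Finset.mem_univ, true_and] at hab
    have ha : a ≠ Fin.last (m+1) := Fin.ne_last_of_lt hab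
    dsimp only
    rcases eq_or_ne b (Fin.last (m+1)) with rfl | hb
    · rw [if_pos rfl]
      simp only [Tr, if_neg ha, if_pos rfl]
      have harg : Real.pi * (((v (a+1) + ((m:ℤ) + 2 + k) - v 0 : ℤ) : ℝ) - ((0:ℤ):ℝ)) /
          (((m+2:ℕ):ℝ) + k) =
          Real.pi * (((v (a+1) : ℤ):ℝ) - ((v 0 : ℤ):ℝ)) / (((m+2:ℕ):ℝ) + k) + Real.pi := by
        field_simp
        push_cast
        ring
      push_cast at harg ⊢
      rw [harg, Real.sin_add_pi]
      rw [show ((v 0 : ℝ)) - (v (a+1) : ℝ) = -((v (a+1) : ℝ) - v 0) from by ring]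
      rw [show Real.pi * -((v (a+1) : ℝ) - v 0) / ((m:ℝ) + 2 + (k:ℝ)) =
        -(Real.pi * ((v (a+1) : ℝ) - v 0) / ((m:ℝ) + 2 + (k:ℝ))) from by ring, Real.sin_neg]
    · rw [if_neg hb]
      simp only [Tr, if_neg ha, if_neg hb]
      push_cast
      ring_nf

end

lemma sum_eq_zero_of_rotate {m k : ℕ} (q : ℂ) (hq : q ≠ 1)
    (f : (Fin (m+2) → ℤ) → ℂ) (hf : ∀ v ∈ Vset (m+2) k, f (Tr m k v) = q * f v) :
    ∑ v ∈ Vset (m+2) k, f v = 0 := by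
  have h1 : ∑ v ∈ Vset (m+2) k, f v = q * ∑ v ∈ Vset (m+2) k, f v := by
    rw [Finset.mul_sum]
    refine Finset.sum_nbij' (Trinv m k) (Tr m k) (fun a ha => Trinv_mem ha)
      (fun a ha => Tr_mem ha) (fun a ha => Tr_Trinv ha) (fun a ha => Trinv_Tr ha) ?_
    intro a ha
    conv_lhs => rw [← Tr_Trinv ha]
    rw [hf _ (Trinv_mem ha)]
  have h2 : (q - 1) * ∑ v ∈ Vset (m+2) k, f v = 0 := by linear_combination -h1
  rcases mul_eq_zero.mp h2 with h | h
  · exact absurd (by linear_combination h) hq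
  · exact h

/-- if `r ∤ Σ_x |λ_x|` then `V_0(r,0,(λ_x)) = 0`. -/
theorem verlinde_vanishing_of_not_dvd (r k : ℕ) (hr : 1 ≤ r) (hk : 1 ≤ k)
    {I : Type*} [Fintype I] (lam : I → Fin r → ℤ) (hlam : ∀ x, lam x ∈ Pbar r k)
    (hnd : ¬ ((r : ℤ) ∣ ∑ x, ∑ i, lam x i)) :
    verlinde r k 0 0 lam = 0 := by
  rcases eq_or_ne r 1 with rfl | hr1
  · exact absurd (by exact_mod_cast one_dvd (∑ x, ∑ i, lam x i)) hnd
  obtain ⟨m, rfl⟩ : ∃ m, r = m + 2 := ⟨r - 2, by omega⟩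
  clear hr hr1 hlam hk
  unfold verlinde
  apply mul_eq_zero_of_right
  set L : ℤ := ∑ x, ∑ i, lam x i with hL
  have hrc : ((m+2:ℕ):ℂ) ≠ 0 := Nat.cast_ne_zero.mpr (by omega)
  have hNc : ((m+2:ℕ):ℂ) + (k:ℂ) ≠ 0 := Ncomplex_ne_zero
  have h2pi : 2 * (Real.pi:ℂ) * Complex.I ≠ 0 := by
    simp [Real.pi_ne_zero, Complex.I_ne_zero]
  set q : ℂ := Complex.exp (2 * (Real.pi:ℂ) * Complex.I * (L:ℂ) / ((m+2:ℕ):ℂ)) with hq_def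
  have hq : q ≠ 1 := by
    rw [hq_def]
    intro h
    obtain ⟨n, hn⟩ := Complex.exp_eq_one_iff.mp h
    rw [div_eq_iff hrc] at hn
    have hLn : (L:ℂ) = ((n:ℂ)) * ((m:ℂ)+2) := by
      apply mul_left_cancel₀ h2pi
      push_cast at hn ⊢
      linear_combination hn
    have hLn2 : L = n * ((m:ℤ)+2) := by exact_mod_cast hLn
    exact hnd ⟨n, by rw [hLn2]; push_cast; ring⟩
  apply sum_eq_zero_of_rotate q hq
  intro v hv
  have hωne : (Complex.exp (2 * (Real.pi:ℂ) * Complex.I *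
      ((((m:ℤ)+2+(k:ℤ) - v 0 : ℤ)) : ℂ) / (((m+2:ℕ) : ℂ) + (k : ℂ)))) ≠ 0 :=
    Complex.exp_ne_zero _
  have hz : zeta (m+2) k (Tr m k v) = fun j =>
      Complex.exp (2 * (Real.pi:ℂ) * Complex.I * ((((m:ℤ)+2+(k:ℤ) - v 0 : ℤ)) : ℂ) /
        (((m+2:ℕ) : ℂ) + (k : ℂ))) * zeta (m+2) k v (finRotate (m+2) j) :=
    funext fun j => zeta_Tr hv j
  have hschur : (∏ x, schur (lam x) (zeta (m+2) k (Tr m k v))) =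
      (Complex.exp (2 * (Real.pi:ℂ) * Complex.I * ((((m:ℤ)+2+(k:ℤ) - v 0 : ℤ)) : ℂ) /
        (((m+2:ℕ) : ℂ) + (k : ℂ)))) ^ L * ∏ x, schur (lam x) (zeta (m+2) k v) := by
    calc (∏ x, schur (lam x) (zeta (m+2) k (Tr m k v)))
        = ∏ x, (Complex.exp (2 * (Real.pi:ℂ) * Complex.I *
            ((((m:ℤ)+2+(k:ℤ) - v 0 : ℤ)) : ℂ) / (((m+2:ℕ) : ℂ) + (k : ℂ)))) ^ (∑ i, lam x i) *
            schur (lam x) (zeta (m+2) k v) :=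
          Finset.prod_congr rfl fun x _ => by
            rw [hz]; exact schur_mul_perm _ _ _ hωne _
      _ = _ := by
          rw [Finset.prod_mul_distrib, prod_zpow_eq _ _ hωne]
  have hsum : ∑ i, ((Tr m k v) i : ℂ) =
      ∑ i, (v i : ℂ) - ((m:ℂ)+2) * (v 0 : ℂ) + ((m:ℂ)+1) * ((m:ℂ)+2+(k:ℂ)) := by
    have h0 := sum_Tr (k := k) (v := v) hv
    have h2 : ((∑ j, Tr m k v j : ℤ) : ℂ) =
        (((∑ j, v j - ((m:ℤ)+2) * v 0 + ((m:ℤ)+1) * ((m:ℤ)+2+(k:ℤ))) : ℤ) : ℂ) := by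
      exact_mod_cast congrArg (fun t : ℤ => (t : ℂ)) h0
    push_cast at h2
    exact h2
  have key2 : Complex.exp (2 * (Real.pi:ℂ) * Complex.I *
        (((0:ℤ):ℂ) / ((m+2:ℕ):ℂ) -
          (∑ x, ∑ i, ((lam x i : ℤ) : ℂ)) / (((m+2:ℕ):ℂ) * (((m+2:ℕ):ℂ) + (k:ℂ)))) *
        (∑ i, ((Tr m k v) i : ℂ))) *
      (Complex.exp (2 * (Real.pi:ℂ) * Complex.I * ((((m:ℤ)+2+(k:ℤ) - v 0 : ℤ)) : ℂ) /
        (((m+2:ℕ) : ℂ) + (k : ℂ)))) ^ L =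
      q * Complex.exp (2 * (Real.pi:ℂ) * Complex.I *
        (((0:ℤ):ℂ) / ((m+2:ℕ):ℂ) -
          (∑ x, ∑ i, ((lam x i : ℤ) : ℂ)) / (((m+2:ℕ):ℂ) * (((m+2:ℕ):ℂ) + (k:ℂ)))) *
        (∑ i, (v i : ℂ))) := by
    rw [← Complex.exp_int_mul, ← Complex.exp_add, hq_def, ← Complex.exp_add]
    congr 1
    rw [hsum]
    have hLc : (L:ℂ) = ∑ x, ∑ i, ((lam x i : ℤ) : ℂ) := by rw [hL]; push_cast; ring
    rw [hLc]
    push_cast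
    have e1 : ((m+2:ℕ):ℂ) = (m:ℂ)+2 := by push_cast; ring
    have e2 : ((m+2:ℕ):ℂ) + (k:ℂ) = (m:ℂ)+2+(k:ℂ) := by push_cast; ring
    have ha : ((m:ℂ)+2) ≠ 0 := e1 ▸ hrc
    have hb : ((m:ℂ)+2+(k:ℂ)) ≠ 0 := e2 ▸ hNc
    field_simp
    ring
  rw [hschur, Dv_Tr hv]
  linear_combination ((∏ x, schur (lam x) (zeta (m+2) k v)) *
      ((Dv (m+2) k v : ℂ)) ^ (1 - ((0:ℕ):ℤ))) * key2
end VerlindePaper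
end
end

section
/- Let r ≥ 2, g ≥ 0, d ∈ ℤ, let (λ_x)_{x∈I′} be a finite family of vectors in P̄_k and λ_z ∈ P̄_k. Then the Verlinde numbers are invariant under the Hecke transformation H^1 in the sense that V_g(r,d,(λ_x)_{x∈I′} together with the extra weight λ_z) = V_g(r,d+1,(λ_x)_{x∈I′} together with the extra weight H^1(λ_z)). -/
open scoped BigOperators
open Complex

noncomputable section

namespace VerlindePaper

section HeckeAux

lemma rk_ne_zero (r k : ℕ) (hr : 0 < r) : ((r : ℂ) + (k : ℂ)) ≠ 0 := by
  have : ((r:ℝ) + (k:ℝ)) ≠ 0 := by positivity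
  simpa [Complex.ext_iff] using fun h => this (by exact_mod_cast h)

lemma zeta_ne_zero (r k : ℕ) (v : Fin r → ℤ) (j : Fin r) : zeta r k v j ≠ 0 :=
  Complex.exp_ne_zero _

lemma zeta_zpow (r k : ℕ) (v : Fin r → ℤ) (j : Fin r) (t : ℤ) :
    zeta r k v j ^ t =
      Complex.exp (2 * (Real.pi : ℂ) * Complex.I * (t : ℂ) * (v j : ℂ) / ((r : ℂ) + (k : ℂ))) := by
  rw [zeta, ← Complex.exp_int_mul]
  congr 1
  ring

lemma zeta_pow_rk (r k : ℕ) (hr : 0 < r) (v : Fin r → ℤ) (j : Fin r) :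
    zeta r k v j ^ ((r : ℤ) + (k : ℤ)) = 1 := by
  rw [zeta_zpow, ← Complex.exp_int_mul_two_pi_mul_I (v j)]
  congr 1
  have h := rk_ne_zero r k hr
  field_simp
  push_cast
  ring

lemma prod_zeta_zpow (r k : ℕ) (v : Fin r → ℤ) (t : ℤ) :
    ∏ j, zeta r k v j ^ t =
      Complex.exp (2 * (Real.pi : ℂ) * Complex.I * (t : ℂ) * (∑ i, (v i : ℂ)) / ((r : ℂ) + (k : ℂ))) := by
  simp only [zeta_zpow]
  rw [← Complex.exp_sum]
  congr 1
  rw [← Finset.sum_div, ← Finset.mul_sum]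

lemma sum_H1 (n k : ℕ) (μ : Fin (n+2) → ℤ) :
    ∑ i, H1 k μ i = (k:ℤ) + (∑ i, μ i) - (n+2) * μ ⟨n, by omega⟩ := by
  rw [Fin.sum_univ_succ]
  have h0 : H1 k μ 0 = (k:ℤ) - μ ⟨n, by omega⟩ + μ ⟨n+1, by omega⟩ := rfl
  have hsucc : ∀ j : Fin (n+1), H1 k μ j.succ = μ j.castSucc - μ ⟨n, by omega⟩ := by
    intro j
    simp only [H1]
    rw [if_neg (by simp [Fin.val_succ])]
    rfl
  rw [h0, Finset.sum_congr rfl (fun j _ => hsucc j), Finset.sum_sub_distrib,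
    Finset.sum_const, Fin.sum_univ_castSucc (f := μ)]
  have hlast : μ (Fin.last (n+1)) = μ ⟨n+1, by omega⟩ := rfl
  rw [hlast]
  simp only [Finset.card_univ, Fintype.card_fin, nsmul_eq_mul]
  push_cast
  ring

lemma det_H1 (n k : ℕ) (μ : Fin (n+2) → ℤ) (v : Fin (n+2) → ℤ) :
    Matrix.det (Matrix.of fun i j : Fin (n+2) =>
        zeta (n+2) k v j ^ (H1 k μ i + (((n+2:ℕ) : ℤ) - 1 - (i : ℕ)))) =
      (-1 : ℂ) ^ (n + 1) * (∏ j, zeta (n+2) k v j ^ (-(μ ⟨n, by omega⟩ + 1))) *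
        Matrix.det (Matrix.of fun i j : Fin (n+2) =>
          zeta (n+2) k v j ^ (μ i + (((n+2:ℕ) : ℤ) - 1 - (i : ℕ)))) := by
  have hzne : ∀ j, zeta (n+2) k v j ≠ 0 := zeta_ne_zero (n+2) k v
  have hpow : ∀ j, zeta (n+2) k v j ^ (((n+2:ℕ):ℤ) + (k:ℤ)) = 1 :=
    zeta_pow_rk (n+2) k (by omega) v
  set c : ℤ := μ ⟨n, by omega⟩ with hc
  set N : Matrix (Fin (n+2)) (Fin (n+2)) ℂ :=
    Matrix.of fun i j => zeta (n+2) k v j ^ (H1 k μ i + (((n+2:ℕ) : ℤ) - 1 - (i : ℕ))) with hN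
  set M : Matrix (Fin (n+2)) (Fin (n+2)) ℂ :=
    Matrix.of fun i j => zeta (n+2) k v j ^ (μ i + (((n+2:ℕ) : ℤ) - 1 - (i : ℕ))) with hM
  have hperm : (N.submatrix (⇑(finRotate (n+2))) id).det
      = ((Equiv.Perm.sign (finRotate (n+2)) : ℤ) : ℂ) * N.det := Matrix.det_permute _ _
  have hentry : N.submatrix (⇑(finRotate (n+2))) id
      = Matrix.of fun i j => zeta (n+2) k v j ^ (-(c + 1)) * M i j := by
    ext i j
    have hiR : finRotate (n+2) i = i + 1 := finRotate_succ_apply i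
    simp only [Matrix.submatrix_apply, id_eq, hiR, hN, hM, Matrix.of_apply]
    by_cases hi : (i : ℕ) = n + 1
    · have hlast : i = Fin.last (n+1) := Fin.ext (by simpa using hi)
      have hval : ((i + 1 : Fin (n+2)) : ℕ) = 0 := by
        rw [Fin.val_add_one, if_pos hlast]
      have hμi : μ ⟨n+1, by omega⟩ = μ i := congrArg μ (Fin.ext (by simp [hi]))
      have h1v : H1 k μ (i+1) = (k:ℤ) - c + μ i := by
        simp only [H1]
        rw [if_pos hval]
        show (k:ℤ) - μ ⟨n, by omega⟩ + μ ⟨n+1, by omega⟩ = _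
        rw [hμi, hc]
      have key : H1 k μ (i+1) + (((n+2:ℕ):ℤ) - 1 - (((i+1 : Fin (n+2)):ℕ) : ℤ)) =
          (((n+2:ℕ):ℤ) + (k:ℤ)) + (-(c+1) + (μ i + (((n+2:ℕ):ℤ) - 1 - ((i:ℕ):ℤ)))) := by
        rw [h1v, hval, hi]; push_cast; ring
      rw [key, zpow_add₀ (hzne j), hpow j, one_mul, zpow_add₀ (hzne j)]
    · have hval : ((i + 1 : Fin (n+2)) : ℕ) = (i : ℕ) + 1 := by
        rw [Fin.val_add_one, if_neg (fun h => hi (by simp [h]))]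
      have hμi : μ ⟨((i+1 : Fin (n+2)):ℕ) - 1, by omega⟩ = μ i :=
        congrArg μ (Fin.ext (by simp [hval]))
      have h1v : H1 k μ (i+1) = μ i - c := by
        simp only [H1]
        rw [if_neg (by omega : ¬ ((i+1 : Fin (n+2)):ℕ) = 0)]
        show μ ⟨((i+1 : Fin (n+2)):ℕ) - 1, by omega⟩ - μ ⟨n, by omega⟩ = _
        rw [hμi, hc]
      have key : H1 k μ (i+1) + (((n+2:ℕ):ℤ) - 1 - (((i+1 : Fin (n+2)):ℕ) : ℤ)) =
          -(c+1) + (μ i + (((n+2:ℕ):ℤ) - 1 - ((i:ℕ):ℤ))) := by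
        rw [h1v, hval]; push_cast; ring
      rw [key, zpow_add₀ (hzne j)]
  have hsign : ((Equiv.Perm.sign (finRotate (n+2)) : ℤ) : ℂ) = (-1 : ℂ) ^ (n+1) := by
    rw [sign_finRotate]; push_cast; ring
  have hrow : (Matrix.of fun i j => zeta (n+2) k v j ^ (-(c + 1)) * M i j).det
      = (∏ j, zeta (n+2) k v j ^ (-(c + 1))) * M.det := Matrix.det_mul_row _ _
  have hmain : (-1 : ℂ) ^ (n+1) * N.det
      = (∏ j, zeta (n+2) k v j ^ (-(c + 1))) * M.det := by
    rw [← hsign, ← hperm, hentry, hrow]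
  have hs : ((-1:ℂ))^(n+1) * ((-1:ℂ))^(n+1) = 1 := by
    rw [← pow_add]; exact Even.neg_one_pow ⟨n+1, by ring⟩
  calc N.det = ((-1:ℂ))^(n+1) * ((-1:ℂ))^(n+1) * N.det := by rw [hs, one_mul]
    _ = (-1:ℂ)^(n+1) * ((-1:ℂ)^(n+1) * N.det) := by ring
    _ = (-1:ℂ)^(n+1) * ((∏ j, zeta (n+2) k v j ^ (-(c + 1))) * M.det) := by rw [hmain]
    _ = _ := by ring

lemma schur_H1 (n k : ℕ) (μ : Fin (n+2) → ℤ) (v : Fin (n+2) → ℤ) :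
    schur (H1 k μ) (zeta (n+2) k v) =
      (-1 : ℂ) ^ (n + 1) * (∏ j, zeta (n+2) k v j ^ (-(μ ⟨n, by omega⟩ + 1))) *
        schur μ (zeta (n+2) k v) := by
  unfold schur
  rw [det_H1, mul_div_assoc]

end HeckeAux

/-- invariance of Verlinde numbers under the Hecke transformation `H¹`:
`V_g(r,d,(λ_x)∪{λ_z}) = V_g(r,d+1,(λ_x)∪{H¹(λ_z)})`. -/
theorem verlinde_hecke_invariance (r k : ℕ) (hr : 2 ≤ r) (hk : 1 ≤ k)
    (g : ℕ) (d : ℤ) {I : Type*} [Fintype I]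
    (lam : I → Fin r → ℤ) (hlam : ∀ x, lam x ∈ Pbar r k)
    (lamZ : Fin r → ℤ) (hZ : lamZ ∈ Pbar r k) :
    verlinde r k g d (fun o : Option I => o.elim lamZ lam) =
      verlinde r k g (d + 1) (fun o : Option I => o.elim (H1 k lamZ) lam) := by
  obtain ⟨n, rfl⟩ : ∃ n, r = n + 2 := ⟨r - 2, by omega⟩
  have hRk : ((n+2:ℕ):ℂ) + (k:ℂ) ≠ 0 := rk_ne_zero (n+2) k (by omega)
  have hRne : ((n+2:ℕ):ℂ) ≠ 0 := Nat.cast_ne_zero.2 (by omega)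
  have hs : ((-1:ℂ))^(n+1) * ((-1:ℂ))^(n+1) = 1 := by
    rw [← pow_add]; exact Even.neg_one_pow ⟨n+1, by ring⟩
  have hsumH : ∑ i : Fin (n+2), ((H1 k lamZ i : ℤ) : ℂ)
      = (k:ℂ) + (∑ i : Fin (n+2), ((lamZ i : ℤ):ℂ))
        - ((n+2:ℕ):ℂ) * ((lamZ ⟨n, by omega⟩ : ℤ):ℂ) := by
    have h := congrArg (fun t : ℤ => (t:ℂ)) (sum_H1 n k lamZ)
    push_cast at h
    simpa using h
  have key : ∀ v : Fin (n+2) → ℤ,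
      (-1:ℂ)^(n+1) *
        ((Complex.exp ((2:ℂ) * (Real.pi:ℂ) * Complex.I *
              ((d:ℂ) / ((n+2:ℕ):ℂ) -
                (∑ x : Option I, ∑ i : Fin (n+2), ((x.elim lamZ lam i : ℤ):ℂ)) /
                  (((n+2:ℕ):ℂ) * (((n+2:ℕ):ℂ) + (k:ℂ)))) *
            ∑ i : Fin (n+2), ((v i : ℤ):ℂ)) *
          ∏ x : Option I, schur (x.elim lamZ lam) (zeta (n+2) k v)) *
          ((Dv (n+2) k v : ℝ):ℂ) ^ ((1:ℤ) - (g:ℤ))) =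
      (Complex.exp ((2:ℂ) * (Real.pi:ℂ) * Complex.I *
              (((d + 1 : ℤ):ℂ) / ((n+2:ℕ):ℂ) -
                (∑ x : Option I, ∑ i : Fin (n+2), ((x.elim (H1 k lamZ) lam i : ℤ):ℂ)) /
                  (((n+2:ℕ):ℂ) * (((n+2:ℕ):ℂ) + (k:ℂ)))) *
            ∑ i : Fin (n+2), ((v i : ℤ):ℂ)) *
          ∏ x : Option I, schur (x.elim (H1 k lamZ) lam) (zeta (n+2) k v)) *
          ((Dv (n+2) k v : ℝ):ℂ) ^ ((1:ℤ) - (g:ℤ)) := by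
    intro v
    have hexp : Complex.exp ((2:ℂ) * (Real.pi:ℂ) * Complex.I *
              ((d:ℂ) / ((n+2:ℕ):ℂ) -
                (∑ x : Option I, ∑ i : Fin (n+2), ((x.elim lamZ lam i : ℤ):ℂ)) /
                  (((n+2:ℕ):ℂ) * (((n+2:ℕ):ℂ) + (k:ℂ)))) *
            ∑ i : Fin (n+2), ((v i : ℤ):ℂ))
        = Complex.exp ((2:ℂ) * (Real.pi:ℂ) * Complex.I *
              (((d + 1 : ℤ):ℂ) / ((n+2:ℕ):ℂ) -
                (∑ x : Option I, ∑ i : Fin (n+2), ((x.elim (H1 k lamZ) lam i : ℤ):ℂ)) /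
                  (((n+2:ℕ):ℂ) * (((n+2:ℕ):ℂ) + (k:ℂ)))) *
            ∑ i : Fin (n+2), ((v i : ℤ):ℂ))
          * Complex.exp ((2:ℂ) * (Real.pi:ℂ) * Complex.I *
              (((-(lamZ ⟨n, by omega⟩ + 1)) : ℤ):ℂ) *
              (∑ i : Fin (n+2), ((v i : ℤ):ℂ)) / (((n+2:ℕ):ℂ) + (k:ℂ))) := by
      rw [← Complex.exp_add]
      congr 1
      simp only [Fintype.sum_option, Option.elim_none, Option.elim_some]
      rw [hsumH]
      have h2 : ((n:ℂ) + 2) ≠ 0 := by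
        intro h; apply hRne; push_cast; linear_combination h
      have h3 : ((n:ℂ) + 2 + (k:ℂ)) ≠ 0 := by
        intro h; apply hRk; push_cast; linear_combination h
      push_cast
      field_simp
      ring
    rw [Fintype.prod_option, Fintype.prod_option]
    simp only [Option.elim_none, Option.elim_some]
    rw [schur_H1, prod_zeta_zpow, hexp]
    ring
  have h1 : (-1:ℂ)^((d+1) * (((n+2:ℕ):ℤ) - 1))
      = (-1:ℂ)^(d * (((n+2:ℕ):ℤ) - 1)) * (-1:ℂ)^(n+1) := by
    rw [show (d+1) * (((n+2:ℕ):ℤ) - 1) = d * (((n+2:ℕ):ℤ) - 1) + ((n+1:ℕ):ℤ) by push_cast; ring,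
      zpow_add₀ (by norm_num : (-1:ℂ) ≠ 0), zpow_natCast]
  have h1' : (-1:ℂ)^(d * (((n+2:ℕ):ℤ) - 1))
      = (-1:ℂ)^((d+1) * (((n+2:ℕ):ℤ) - 1)) * (-1:ℂ)^(n+1) := by
    rw [h1, mul_assoc, hs, mul_one]
  simp only [verlinde]
  rw [Finset.sum_congr rfl (fun v _ => (key v).symm), ← Finset.mul_sum, h1']
  ring

end VerlindePaper
end
end
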